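/- arXiv:1812.09970 — 6 statements merged into one kernel-verified Lean document; each statement's English description precedes it below -/
import Mathlib

section
/- In the condensed panel setting with Gaussian errors, if deterministic weights ω̃ ∈ Ω and λ̃ ∈ Λ (the unit simplices) satisfy ‖ω̃‖ = o(N₁^{−1/2}) and ‖λ̃ − ψ‖ = o(T₁^{−1/2}), and the oracle bias condition L_{NT} − ω̃'L_{:T} − L_{N:}λ̃ + ω̃'L_{::}λ̃ = o((N₁T₁)^{−1/2}) holds along the sequence of problems, then τ̂(λ̃,ω̃) − τ = ε_{NT} − ε_{N:}ψ + o_p((N₁T₁)^{−1/2}). -/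
open Filter MeasureTheory ProbabilityTheory Matrix Real Asymptotics

noncomputable section

namespace SDIDCond

/-- the unit simplex in `ℝ^d`. -/
def simplex (d : ℕ) : Set (Fin d → ℝ) := {v | (∀ i, 0 ≤ v i) ∧ ∑ i, v i = 1}

/-- condensed outcome `Y = L + 1{i = N, t = T}·τ + ε`. -/
def Ycond {N0 T0 : ℕ} (L : Matrix (Fin (N0 + 1)) (Fin (T0 + 1)) ℝ) (τ : ℝ)
    (Em : Matrix (Fin (N0 + 1)) (Fin (T0 + 1)) ℝ) : Matrix (Fin (N0 + 1)) (Fin (T0 + 1)) ℝ :=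
  fun i t => L i t + (if i = Fin.last N0 ∧ t = Fin.last T0 then τ else 0) + Em i t

/-- the condensed weighted difference-in-differences estimator
`τ̂(λ,ω) = Y_{NT} − (Y_{N:}λ + ω'Y_{:T} − ω'Y_{::}λ)`. -/
def tauCond {N0 T0 : ℕ} (lam : Fin T0 → ℝ) (w : Fin N0 → ℝ)
    (Y : Matrix (Fin (N0 + 1)) (Fin (T0 + 1)) ℝ) : ℝ :=
  Y (Fin.last N0) (Fin.last T0)
    - ((∑ t : Fin T0, Y (Fin.last N0) t.castSucc * lam t)
       + (∑ i : Fin N0, w i * Y i.castSucc (Fin.last T0))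
       - ∑ i : Fin N0, ∑ t : Fin T0, w i * Y i.castSucc t.castSucc * lam t)

/-- the `T₀ × T₀` block `Σ_{::}`. -/
def Scc {T0 : ℕ} (S : Matrix (Fin (T0 + 1)) (Fin (T0 + 1)) ℝ) : Matrix (Fin T0) (Fin T0) ℝ :=
  S.submatrix Fin.castSucc Fin.castSucc

/-- the autoregression vector `ψ = Σ_{::}⁻¹ Σ_{:,T}`, i.e. the (unique) minimizer of
`v ↦ E(ε_{1:}v − ε_{1T})²` for a row with covariance `Σ`. -/
def psiC {T0 : ℕ} (S : Matrix (Fin (T0 + 1)) (Fin (T0 + 1)) ℝ) : Fin T0 → ℝ :=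
  (Scc S)⁻¹ *ᵥ fun s : Fin T0 => S s.castSucc (Fin.last T0)

/-- `Var(ε_{1:}ψ − ε_{1T}) = [ψ; −1]'·Σ·[ψ; −1]` for a row with covariance `Σ`. -/
def varAR {T0 : ℕ} (S : Matrix (Fin (T0 + 1)) (Fin (T0 + 1)) ℝ) : ℝ :=
  (Fin.snoc (psiC S) (-1) : Fin (T0 + 1) → ℝ) ⬝ᵥ
    (S *ᵥ (Fin.snoc (psiC S) (-1) : Fin (T0 + 1) → ℝ))

/-- `T₁ = 1/Var(ε_{1:}ψ − ε_{1T})`. -/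
def T1 {T0 : ℕ} (S : Matrix (Fin (T0 + 1)) (Fin (T0 + 1)) ℝ) : ℝ := (varAR S)⁻¹

/-- Euclidean norm of a finite vector. -/
def norm2 {k : ℕ} (v : Fin k → ℝ) : ℝ := Real.sqrt (∑ i, v i ^ 2)

/-- `svalSucc A k` is the `(k+1)`-st largest singular value of `A`, via the
Eckart–Young characterization. -/
def svalSucc {p q : ℕ} (A : Matrix (Fin p) (Fin q) ℝ) (k : ℕ) : ℝ :=
  sInf {c : ℝ | 0 ≤ c ∧ ∃ B : Matrix (Fin p) (Fin q) ℝ, B.rank ≤ k ∧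
    ∀ x : Fin q → ℝ, norm2 (A *ᵥ x - B *ᵥ x) ≤ c * norm2 x}

/-- the realized penalized objective defining `(ω̂₀, ω̂)`. -/
def objW {N0 T0 : ℕ} (ζ : ℝ) (Y : Matrix (Fin (N0 + 1)) (Fin (T0 + 1)) ℝ)
    (w0 : ℝ) (w : Fin N0 → ℝ) : ℝ :=
  (∑ t : Fin T0,
    (w0 + (∑ i : Fin N0, w i * Y i.castSucc t.castSucc) - Y (Fin.last N0) t.castSucc) ^ 2)
  + ζ ^ 2 * T0 * ∑ i, w i ^ 2

/-- the realized objective defining `(λ̂₀, λ̂)`. -/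
def objL {N0 T0 : ℕ} (Y : Matrix (Fin (N0 + 1)) (Fin (T0 + 1)) ℝ)
    (l0 : ℝ) (l : Fin T0 → ℝ) : ℝ :=
  ∑ i : Fin N0,
    (l0 + (∑ t : Fin T0, Y i.castSucc t.castSucc * l t) - Y i.castSucc (Fin.last T0)) ^ 2

/-- the oracle objective defining `(ω̃₀, ω̃)`, with `σ² = trace(Σ_{::})/T₀`. -/
def objWOracle {N0 T0 : ℕ} (ζ : ℝ) (S : Matrix (Fin (T0 + 1)) (Fin (T0 + 1)) ℝ)
    (L : Matrix (Fin (N0 + 1)) (Fin (T0 + 1)) ℝ) (w0 : ℝ) (w : Fin N0 → ℝ) : ℝ :=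
  (∑ t : Fin T0,
    (w0 + (∑ i : Fin N0, w i * L i.castSucc t.castSucc) - L (Fin.last N0) t.castSucc) ^ 2)
  + (ζ ^ 2 + Matrix.trace (Scc S) / T0) * T0 * ∑ i, w i ^ 2

/-- the oracle objective defining `(λ̃₀, λ̃)`; note
`‖Σ_{::}^{1/2}(λ − ψ)‖² = (λ − ψ)'Σ_{::}(λ − ψ)`. -/
def objLOracle {N0 T0 : ℕ} (S : Matrix (Fin (T0 + 1)) (Fin (T0 + 1)) ℝ)
    (L : Matrix (Fin (N0 + 1)) (Fin (T0 + 1)) ℝ) (l0 : ℝ) (l : Fin T0 → ℝ) : ℝ :=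
  (∑ i : Fin N0,
    (l0 + (∑ t : Fin T0, L i.castSucc t.castSucc * l t) - L i.castSucc (Fin.last T0)) ^ 2)
  + (N0 : ℝ) * ((l - psiC S) ⬝ᵥ (Scc S *ᵥ (l - psiC S)))



/-! ### Auxiliary lemmas -/

section GaussAux
open Set

lemma integral_sq_exp_neg_mul_sq' {b : ℝ} (hb : 0 < b) :
    ∫ x : ℝ, x ^ 2 * Real.exp (-b * x ^ 2) = (2 * b)⁻¹ * Real.sqrt (π / b) := by
  have hint2 : Integrable fun x : ℝ => x ^ 2 * Real.exp (-b * x ^ 2) := by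
    have := integrable_rpow_mul_exp_neg_mul_sq hb (s := 2) (by norm_num)
    simpa [Real.rpow_natCast] using this
  have hint0 : Integrable fun x : ℝ => Real.exp (-b * x ^ 2) := integrable_exp_neg_mul_sq hb
  have hderiv : ∀ x ∈ Ici (0:ℝ), HasDerivAt (fun x : ℝ => -(2*b)⁻¹ * (x * Real.exp (-b * x ^ 2)))
      (x ^ 2 * Real.exp (-b * x ^ 2) - (2*b)⁻¹ * Real.exp (-b * x ^ 2)) x := by
    intro x _
    have h1 : HasDerivAt (fun x : ℝ => -b * x ^ 2) (-b * (2 * x)) x := by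
      simpa using ((hasDerivAt_pow 2 x).const_mul (-b))
    have h2 : HasDerivAt (fun x : ℝ => Real.exp (-b * x ^ 2))
        (Real.exp (-b * x ^ 2) * (-b * (2 * x))) x := h1.exp
    have h3 : HasDerivAt (fun x : ℝ => x * Real.exp (-b * x ^ 2))
        (1 * Real.exp (-b * x ^ 2) + x * (Real.exp (-b * x ^ 2) * (-b * (2 * x)))) x :=
      (hasDerivAt_id x).mul h2
    have h4 := h3.const_mul (-(2*b)⁻¹)
    refine h4.congr_deriv ?_
    have hb2 : (2*b)⁻¹ * (2*b) = 1 := inv_mul_cancel₀ (by positivity)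
    linear_combination (x ^ 2 * Real.exp (-b * x ^ 2)) * hb2
  have htend : Tendsto (fun x : ℝ => -(2*b)⁻¹ * (x * Real.exp (-b * x ^ 2))) atTop (nhds 0) := by
    have h0 : Tendsto (fun x : ℝ => x * Real.exp (-b * x ^ 2)) atTop (nhds 0) := by
      have := rpow_mul_exp_neg_mul_sq_isLittleO_exp_neg hb 1
      have h1 : Tendsto (fun x : ℝ => Real.exp (-(1/2) * x)) atTop (nhds 0) := by
        have : Tendsto (fun x : ℝ => -(1/2) * x) atTop atBot :=
          Tendsto.const_mul_atTop_of_neg (by norm_num) tendsto_id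
        exact Real.tendsto_exp_atBot.comp this
      have h2 := this.trans_tendsto h1
      simpa [Real.rpow_one] using h2
    simpa using h0.const_mul (-(2*b)⁻¹)
  have hIoi : ∫ x in Ioi (0:ℝ),
      (x ^ 2 * Real.exp (-b * x ^ 2) - (2*b)⁻¹ * Real.exp (-b * x ^ 2))
        = 0 - (-(2*b)⁻¹ * ((0:ℝ) * Real.exp (-b * (0:ℝ) ^ 2))) := by
    exact integral_Ioi_of_hasDerivAt_of_tendsto' hderiv
      ((hint2.sub (hint0.const_mul _)).integrableOn) htend
  have hIoi2 : ∫ x in Ioi (0:ℝ), x ^ 2 * Real.exp (-b * x ^ 2)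
      = (2*b)⁻¹ * (Real.sqrt (π / b) / 2) := by
    have hsplit := integral_sub (hint2.integrableOn) ((hint0.const_mul ((2*b)⁻¹)).integrableOn)
      (μ := volume.restrict (Ioi (0:ℝ)))
    rw [hsplit] at hIoi
    have hg := integral_gaussian_Ioi b
    rw [MeasureTheory.integral_const_mul, hg] at hIoi
    simp only [mul_zero, neg_zero, zero_sub, neg_neg, mul_zero, neg_zero] at hIoi
    linarith [hIoi]
  have heven : (fun x : ℝ => x ^ 2 * Real.exp (-b * x ^ 2))
      = fun x : ℝ => |x| ^ 2 * Real.exp (-b * |x| ^ 2) := by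
    funext x; rw [sq_abs]
  calc ∫ x : ℝ, x ^ 2 * Real.exp (-b * x ^ 2)
      = ∫ x : ℝ, |x| ^ 2 * Real.exp (-b * |x| ^ 2) := by rw [heven]
    _ = 2 * ∫ x in Ioi (0:ℝ), x ^ 2 * Real.exp (-b * x ^ 2) :=
        integral_comp_abs (f := fun x : ℝ => x ^ 2 * Real.exp (-b * x ^ 2))
    _ = (2 * b)⁻¹ * Real.sqrt (π / b) := by rw [hIoi2]; ring

lemma integral_id_exp_neg_mul_sq' {b : ℝ} (hb : 0 < b) :
    ∫ x : ℝ, x * Real.exp (-b * x ^ 2) = 0 := by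
  have h := integral_neg_eq_self (fun x : ℝ => x * Real.exp (-b * x ^ 2)) volume
  simp only [neg_mul, neg_sq] at h
  have h2 : ∫ x : ℝ, -(x * Real.exp (-b * x ^ 2)) = ∫ x : ℝ, x * Real.exp (-b * x ^ 2) := by
    simpa [neg_mul] using h
  rw [integral_neg] at h2
  linarith

lemma integral_gaussianReal_fun (m : ℝ) {v : NNReal} (hv : v ≠ 0) (g : ℝ → ℝ) :
    ∫ x, g x ∂(gaussianReal m v) = ∫ x, gaussianPDFReal m v x * g x := by
  rw [gaussianReal_of_var_ne_zero _ hv]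
  have : (gaussianPDF m v) = fun x => ((gaussianPDFReal m v x).toNNReal : ENNReal) := by
    funext x; rfl
  rw [this, integral_withDensity_eq_integral_smul
    ((measurable_gaussianPDFReal m v).real_toNNReal) g]
  congr 1
  funext x
  rw [NNReal.smul_def, smul_eq_mul, Real.coe_toNNReal _ (gaussianPDFReal_nonneg m v x)]

lemma gaussianPDFReal_eq' (v : NNReal) (hv : v ≠ 0) (x : ℝ) :
    gaussianPDFReal 0 v x = (Real.sqrt (2 * π * v))⁻¹ * Real.exp (-(2 * (v:ℝ))⁻¹ * x ^ 2) := by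
  have hvpos : (0:ℝ) < v := lt_of_le_of_ne v.coe_nonneg (by exact_mod_cast (Ne.symm hv))
  rw [gaussianPDFReal]
  congr 1
  rw [sub_zero]
  congr 1
  field_simp

lemma integral_id_gaussianReal_zero (v : NNReal) : ∫ x, x ∂(gaussianReal 0 v) = 0 := by
  by_cases hv : v = 0
  · simp [hv]
  have hvpos : (0:ℝ) < v := lt_of_le_of_ne v.coe_nonneg (by exact_mod_cast (Ne.symm hv))
  have hb : (0:ℝ) < (2 * (v:ℝ))⁻¹ := by positivity
  rw [integral_gaussianReal_fun 0 hv]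
  have : ∀ x : ℝ, gaussianPDFReal 0 v x * x
      = (Real.sqrt (2 * π * v))⁻¹ * (x * Real.exp (-(2 * (v:ℝ))⁻¹ * x ^ 2)) := by
    intro x; rw [gaussianPDFReal_eq' v hv]; ring
  simp_rw [this]
  rw [MeasureTheory.integral_const_mul, integral_id_exp_neg_mul_sq' hb, mul_zero]

lemma integral_sq_gaussianReal_zero (v : NNReal) : ∫ x, x ^ 2 ∂(gaussianReal 0 v) = v := by
  by_cases hv : v = 0
  · simp [hv]
  have hvpos : (0:ℝ) < v := lt_of_le_of_ne v.coe_nonneg (by exact_mod_cast (Ne.symm hv))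
  have hb : (0:ℝ) < (2 * (v:ℝ))⁻¹ := by positivity
  rw [integral_gaussianReal_fun 0 hv]
  have : ∀ x : ℝ, gaussianPDFReal 0 v x * x ^ 2
      = (Real.sqrt (2 * π * v))⁻¹ * (x ^ 2 * Real.exp (-(2 * (v:ℝ))⁻¹ * x ^ 2)) := by
    intro x; rw [gaussianPDFReal_eq' v hv]; ring
  simp_rw [this]
  rw [MeasureTheory.integral_const_mul, integral_sq_exp_neg_mul_sq' hb]
  rw [show ((2 * ((2 * (v:ℝ))⁻¹))⁻¹ : ℝ) = (v:ℝ) by field_simp]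
  rw [show (π / (2 * (v:ℝ))⁻¹ : ℝ) = 2 * π * v by field_simp]
  have h2 : Real.sqrt (2 * π * v) ≠ 0 := by
    refine (Real.sqrt_ne_zero').mpr ?_
    positivity
  field_simp

lemma integrable_sq_gaussianReal_zero (v : NNReal) :
    Integrable (fun x : ℝ => x ^ 2) (gaussianReal 0 v) := by
  by_cases hv : v = 0
  · simp only [hv, gaussianReal_zero_var]
    constructor
    · exact (measurable_id.pow_const 2).aestronglyMeasurable
    · rw [HasFiniteIntegral, lintegral_dirac' _ (by measurability)]
      simp
  have hvpos : (0:ℝ) < v := lt_of_le_of_ne v.coe_nonneg (by exact_mod_cast (Ne.symm hv))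
  have hb : (0:ℝ) < (2 * (v:ℝ))⁻¹ := by positivity
  rw [gaussianReal_of_var_ne_zero _ hv]
  rw [show (gaussianPDF 0 v) = fun x => ((gaussianPDFReal 0 v x).toNNReal : ENNReal) from rfl]
  rw [integrable_withDensity_iff ((measurable_gaussianPDFReal 0 v).real_toNNReal.coe_nnreal_ennreal)
    (ae_of_all _ fun x => ENNReal.coe_lt_top)]
  have hint2 : Integrable fun x : ℝ => x ^ 2 * Real.exp (-(2 * (v:ℝ))⁻¹ * x ^ 2) := by
    have := integrable_rpow_mul_exp_neg_mul_sq hb (s := 2) (by norm_num)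
    simpa [Real.rpow_natCast] using this
  apply Integrable.mono' (hint2.const_mul (Real.sqrt (2 * π * v))⁻¹)
  · exact ((measurable_id.pow_const 2).mul
      ((measurable_gaussianPDFReal 0 v).real_toNNReal.coe_nnreal_ennreal.ennreal_toReal)).aestronglyMeasurable
  · refine ae_of_all _ fun x => ?_
    rw [Real.norm_eq_abs, abs_of_nonneg (by positivity)]
    simp only [ENNReal.coe_toReal]
    rw [Real.coe_toNNReal _ (gaussianPDFReal_nonneg 0 v x), gaussianPDFReal_eq' v hv]
    rw [mul_comm]
    apply le_of_eq; ring

variable {Ω' : Type} [MeasurableSpace Ω'] {μ' : Measure Ω'} [IsProbabilityMeasure μ']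
  {f : Ω' → ℝ} {v : NNReal}

lemma aemeasurable_of_map_gauss (h : Measure.map f μ' = gaussianReal 0 v) :
    AEMeasurable f μ' := by
  by_contra hc
  rw [Measure.map_of_not_aemeasurable hc] at h
  have h1 : (0 : Measure ℝ) Set.univ = (gaussianReal 0 v) Set.univ := by rw [h]
  simp [measure_univ] at h1

lemma memℒp_of_map_gauss (h : Measure.map f μ' = gaussianReal 0 v) : MemLp f 2 μ' := by
  have haem := aemeasurable_of_map_gauss h
  have : MemLp (id : ℝ → ℝ) 2 (Measure.map f μ') := by
    rw [h]
    refine (memLp_two_iff_integrable_sq measurable_id.aestronglyMeasurable).mpr ?_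
    simpa using integrable_sq_gaussianReal_zero v
  exact (memLp_map_measure_iff measurable_id.aestronglyMeasurable haem).mp this

lemma integral_of_map_gauss (h : Measure.map f μ' = gaussianReal 0 v) :
    ∫ ω, f ω ∂μ' = 0 := by
  have haem := aemeasurable_of_map_gauss h
  have := MeasureTheory.integral_map haem (f := fun x : ℝ => x)
    measurable_id.aestronglyMeasurable
  rw [h, integral_id_gaussianReal_zero] at this
  exact this.symm

lemma integral_sq_of_map_gauss (h : Measure.map f μ' = gaussianReal 0 v) :
    ∫ ω, f ω ^ 2 ∂μ' = v := by
  have haem := aemeasurable_of_map_gauss h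
  have := MeasureTheory.integral_map haem (f := fun x : ℝ => x ^ 2)
    (measurable_id.pow_const 2).aestronglyMeasurable
  rw [h, integral_sq_gaussianReal_zero] at this
  exact this.symm

lemma variance_of_map_gauss (h : Measure.map f μ' = gaussianReal 0 v) :
    variance f μ' = v := by
  rw [variance_eq_sub (memℒp_of_map_gauss h), integral_of_map_gauss h]
  simp only [Pi.pow_apply]
  rw [integral_sq_of_map_gauss h]
  ring

end GaussAux

/-- coefficient vectors for the error decomposition -/
def cvec {N0 T0 : ℕ} (w : Fin N0 → ℝ) (lam ψv : Fin T0 → ℝ) :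
    Fin (N0 + 1) → Fin (T0 + 1) → ℝ :=
  Fin.snoc (fun i => Fin.snoc (fun s => w i * lam s) (-(w i)))
    (Fin.snoc (fun s => ψv s - lam s) 0)

lemma tauCond_linear {N0 T0 : ℕ} (lam : Fin T0 → ℝ) (w : Fin N0 → ℝ)
    (L : Matrix (Fin (N0 + 1)) (Fin (T0 + 1)) ℝ) (τ : ℝ)
    (Em : Matrix (Fin (N0 + 1)) (Fin (T0 + 1)) ℝ) (ψv : Fin T0 → ℝ) :
    tauCond lam w (Ycond L τ Em) - τ
      - (Em (Fin.last N0) (Fin.last T0) - ∑ s : Fin T0, Em (Fin.last N0) s.castSucc * ψv s)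
    = tauCond lam w L
      + ∑ i : Fin (N0 + 1), ∑ t : Fin (T0 + 1), cvec w lam ψv i t * Em i t := by
  have hne : ∀ (k : ℕ) (i : Fin k), (i.castSucc : Fin (k+1)) ≠ Fin.last k :=
    fun k i => (Fin.castSucc_lt_last i).ne
  simp only [tauCond, Ycond, cvec, Fin.sum_univ_castSucc, Fin.snoc_last, Fin.snoc_castSucc,
    hne, false_and, and_false, if_false, and_self, if_true]
  simp only [Finset.sum_add_distrib, Finset.sum_mul, add_mul, mul_add, Finset.mul_sum,
    sub_mul, mul_sub, neg_mul, mul_neg, Finset.sum_sub_distrib, Finset.sum_neg_distrib]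
  ring_nf
  simp only [mul_zero, zero_mul, Finset.sum_const_zero, add_zero, sub_zero, neg_zero, zero_sub,
    zero_add]
  have h1 : ∑ s : Fin T0, Em (Fin.last N0) s.castSucc * ψv s
      = ∑ s : Fin T0, ψv s * Em (Fin.last N0) s.castSucc :=
    Finset.sum_congr rfl fun x _ => mul_comm _ _
  have h2 : ∑ s : Fin T0, Em (Fin.last N0) s.castSucc * lam s
      = ∑ s : Fin T0, lam s * Em (Fin.last N0) s.castSucc :=
    Finset.sum_congr rfl fun x _ => mul_comm _ _
  have h3 : ∑ i : Fin N0, ∑ s : Fin T0, w i * Em i.castSucc s.castSucc * lam s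
      = ∑ i : Fin N0, ∑ s : Fin T0, w i * lam s * Em i.castSucc s.castSucc :=
    Finset.sum_congr rfl fun i _ => Finset.sum_congr rfl fun s _ => by ring
  rw [h1, h2, h3]
  ring

/-- quadratic form with last coordinate zero reduces to the `Scc` block -/
lemma quad_snoc_zero {T0 : ℕ} (S : Matrix (Fin (T0 + 1)) (Fin (T0 + 1)) ℝ) (a : Fin T0 → ℝ) :
    (Fin.snoc a 0 : Fin (T0 + 1) → ℝ) ⬝ᵥ (S *ᵥ (Fin.snoc a 0 : Fin (T0 + 1) → ℝ))
      = a ⬝ᵥ (Scc S *ᵥ a) := by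
  simp [dotProduct, mulVec, Scc, Fin.sum_univ_castSucc, Fin.snoc_last, Fin.snoc_castSucc,
    submatrix_apply]

set_option maxHeartbeats 2000000 in
/-- oracle asymptotic linearity: in the condensed panel setting with
independent Gaussian rows (covariance `Σ` for the control rows and `N₁⁻¹Σ` for the
last row, with the eigenvalues of `Σ_{::}` bounded and bounded away from zero), if the
deterministic simplex weights `ω̃, λ̃` satisfy `‖ω̃‖ = o(N₁^{−1/2})`,
`‖λ̃ − ψ‖ = o(T₁^{−1/2})` and the oracle bias condition
`L_{NT} − ω̃'L_{:T} − L_{N:}λ̃ + ω̃'L_{::}λ̃ = o((N₁T₁)^{−1/2})`, then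
`τ̂(λ̃,ω̃) − τ = ε_{NT} − ε_{N:}ψ + o_p((N₁T₁)^{−1/2})`. -/
theorem oracle_asymptotic_linearity
    (N0 T0 : ℕ → ℕ) (N1 : ℕ → ℝ) (hN1 : ∀ n, 0 < N1 n)
    (Ωt : ℕ → Type) [∀ n, MeasurableSpace (Ωt n)]
    (μ : ∀ n, Measure (Ωt n)) [∀ n, IsProbabilityMeasure (μ n)]
    (L : ∀ n, Matrix (Fin (N0 n + 1)) (Fin (T0 n + 1)) ℝ) (τ : ℕ → ℝ)
    (E : ∀ n, Ωt n → Matrix (Fin (N0 n + 1)) (Fin (T0 n + 1)) ℝ)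
    (Sg : ∀ n, Matrix (Fin (T0 n + 1)) (Fin (T0 n + 1)) ℝ)
    (hSgSymm : ∀ n, (Sg n)ᵀ = Sg n)
    -- rows are independent mean-zero Gaussian vectors, with covariance Σ for the
    -- first N₀ rows and N₁⁻¹Σ for the last row
    (hrowindep : ∀ n, iIndepFun (m := fun _ => inferInstance)
      (fun (i : Fin (N0 n + 1)) (ω : Ωt n) => fun t => E n ω i t) (μ n))
    (hgaussCtrl : ∀ n (i : Fin (N0 n)) (a : Fin (T0 n + 1) → ℝ),
      Measure.map (fun ω => ∑ t, a t * E n ω i.castSucc t) (μ n)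
        = gaussianReal 0 (Real.toNNReal (a ⬝ᵥ ((Sg n) *ᵥ a))))
    (hgaussLast : ∀ n (a : Fin (T0 n + 1) → ℝ),
      Measure.map (fun ω => ∑ t, a t * E n ω (Fin.last (N0 n)) t) (μ n)
        = gaussianReal 0 (Real.toNNReal ((N1 n)⁻¹ * (a ⬝ᵥ ((Sg n) *ᵥ a)))))
    -- eigenvalues of Σ_{::} bounded and bounded away from zero
    (hEig : ∃ c₁ c₂ : ℝ, 0 < c₁ ∧ ∀ n (a : Fin (T0 n) → ℝ),
      c₁ * (a ⬝ᵥ a) ≤ a ⬝ᵥ (Scc (Sg n) *ᵥ a) ∧ a ⬝ᵥ (Scc (Sg n) *ᵥ a) ≤ c₂ * (a ⬝ᵥ a))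
    -- deterministic simplex weights
    (tw : ∀ n, Fin (N0 n) → ℝ) (tl : ∀ n, Fin (T0 n) → ℝ)
    (htwMem : ∀ n, tw n ∈ simplex (N0 n)) (htlMem : ∀ n, tl n ∈ simplex (T0 n))
    (hwSmall : (fun n => norm2 (tw n)) =o[atTop] fun n => (Real.sqrt (N1 n))⁻¹)
    (hlSmall : (fun n => norm2 (tl n - psiC (Sg n)))
      =o[atTop] fun n => (Real.sqrt (T1 (Sg n)))⁻¹)
    -- oracle bias condition: L_{NT} − ω̃'L_{:T} − L_{N:}λ̃ + ω̃'L_{::}λ̃ = o((N₁T₁)^{−1/2})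
    (hbias : (fun n => tauCond (tl n) (tw n) (L n))
      =o[atTop] fun n => (Real.sqrt (N1 n * T1 (Sg n)))⁻¹) :
    -- Conclusion: τ̂(λ̃,ω̃) − τ = ε_{NT} − ε_{N:}ψ + o_p((N₁T₁)^{−1/2})
    ∀ ε : ℝ, 0 < ε →
      Tendsto (fun n => μ n {ω : Ωt n | ε ≤
          |Real.sqrt (N1 n * T1 (Sg n)) *
            (tauCond (tl n) (tw n) (Ycond (L n) (τ n) (E n ω)) - τ n
              - (E n ω (Fin.last (N0 n)) (Fin.last (T0 n))
                  - ∑ s : Fin (T0 n),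
                      E n ω (Fin.last (N0 n)) s.castSucc * psiC (Sg n) s))|})
        atTop (nhds 0) := by
  classical
  obtain ⟨c₁, c₂, hc₁, hEig'⟩ := hEig
  intro ε hε
  -- abbreviations
  set δ : ℕ → ℝ := fun n => norm2 (tl n - psiC (Sg n)) with hδdef
  set W : ℕ → ℝ := fun n => norm2 (tw n) with hWdef
  set sq : ℕ → ℝ := fun n => max (T1 (Sg n)) 0 * δ n ^ 2 with hsqdef
  set mq : ℕ → ℝ := fun n => N1 n * W n ^ 2 with hmqdef
  set c2p : ℝ := max c₂ 0 with hc2pdef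
  set B : ℕ → ℝ := fun n => c2p * sq n + (2 * c2p * (mq n * sq n) + 2 * mq n) with hBdef
  set k : ℕ → ℝ := fun n => Real.sqrt (N1 n * T1 (Sg n)) with hkdef
  have hδ0 : ∀ n, 0 ≤ δ n := fun n => Real.sqrt_nonneg _
  have hW0 : ∀ n, 0 ≤ W n := fun n => Real.sqrt_nonneg _
  have hk0 : ∀ n, 0 ≤ k n := fun n => Real.sqrt_nonneg _
  -- Step A : mq → 0
  have hm : Tendsto mq atTop (nhds 0) := by
    rw [tendsto_order]
    constructor
    · intro a ha
      filter_upwards with n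
      have : 0 ≤ mq n := mul_nonneg (hN1 n).le (sq_nonneg _)
      linarith
    · intro a ha
      have hc : (0:ℝ) < Real.sqrt (a/2) := Real.sqrt_pos.mpr (by linarith)
      filter_upwards [hwSmall.def hc] with n hn
      have hsq : W n ≤ Real.sqrt (a/2) * (Real.sqrt (N1 n))⁻¹ := by
        have h1 : ‖W n‖ = W n := Real.norm_of_nonneg (hW0 n)
        have h2 : ‖(Real.sqrt (N1 n))⁻¹‖ = (Real.sqrt (N1 n))⁻¹ :=
          Real.norm_of_nonneg (by positivity)
        rw [h1, h2] at hn
        exact hn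
      have h3 : W n ^ 2 ≤ (Real.sqrt (a/2) * (Real.sqrt (N1 n))⁻¹) ^ 2 :=
        pow_le_pow_left₀ (hW0 n) hsq 2
      have h4 : (Real.sqrt (a/2)) ^ 2 = a / 2 := Real.sq_sqrt (by linarith)
      have h5 : (Real.sqrt (N1 n)) ^ 2 = N1 n := Real.sq_sqrt (hN1 n).le
      have h6 : mq n ≤ a / 2 := by
        have hh : (Real.sqrt (a/2) * (Real.sqrt (N1 n))⁻¹) ^ 2 = (a/2) * (N1 n)⁻¹ := by
          rw [mul_pow, h4, inv_pow, h5]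
        have h7 : mq n ≤ N1 n * ((a/2) * (N1 n)⁻¹) := by
          rw [← hh]; exact mul_le_mul_of_nonneg_left h3 (hN1 n).le
        calc mq n ≤ N1 n * ((a/2) * (N1 n)⁻¹) := h7
          _ = a/2 * (N1 n * (N1 n)⁻¹) := by ring
          _ = a/2 := by rw [mul_inv_cancel₀ (hN1 n).ne', mul_one]
      linarith
  -- Step B : sq → 0
  have hs : Tendsto sq atTop (nhds 0) := by
    rw [tendsto_order]
    constructor
    · intro a ha
      filter_upwards with n
      have : 0 ≤ sq n := mul_nonneg (le_max_right _ _) (sq_nonneg _)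
      linarith
    · intro a ha
      have hc : (0:ℝ) < Real.sqrt (a/2) := Real.sqrt_pos.mpr (by linarith)
      filter_upwards [hlSmall.def hc] with n hn
      have hsq : δ n ≤ Real.sqrt (a/2) * (Real.sqrt (T1 (Sg n)))⁻¹ := by
        have h1 : ‖δ n‖ = δ n := Real.norm_of_nonneg (hδ0 n)
        have h2 : ‖(Real.sqrt (T1 (Sg n)))⁻¹‖ = (Real.sqrt (T1 (Sg n)))⁻¹ :=
          Real.norm_of_nonneg (by positivity)
        rw [h1, h2] at hn
        exact hn
      have h3 : δ n ^ 2 ≤ (a/2) * (((Real.sqrt (T1 (Sg n))) ^ 2)⁻¹) := by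
        have := pow_le_pow_left₀ (hδ0 n) hsq 2
        calc δ n ^ 2 ≤ (Real.sqrt (a/2) * (Real.sqrt (T1 (Sg n)))⁻¹) ^ 2 := this
          _ = (a/2) * (((Real.sqrt (T1 (Sg n))) ^ 2)⁻¹) := by
              rw [mul_pow, Real.sq_sqrt (by linarith : (0:ℝ) ≤ a/2), inv_pow]
      have hle1 : max (T1 (Sg n)) 0 * (((Real.sqrt (T1 (Sg n))) ^ 2)⁻¹) ≤ 1 := by
        rcases le_or_gt (T1 (Sg n)) 0 with h | h
        · rw [max_eq_right h]
          simp
        · rw [max_eq_left h.le, Real.sq_sqrt h.le]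
          rw [mul_inv_cancel₀ h.ne']
      have : sq n ≤ (a/2) * (max (T1 (Sg n)) 0 * (((Real.sqrt (T1 (Sg n))) ^ 2)⁻¹)) := by
        have := mul_le_mul_of_nonneg_left h3 (le_max_right (T1 (Sg n)) 0)
        calc sq n ≤ max (T1 (Sg n)) 0 * ((a/2) * (((Real.sqrt (T1 (Sg n))) ^ 2)⁻¹)) := this
          _ = (a/2) * (max (T1 (Sg n)) 0 * (((Real.sqrt (T1 (Sg n))) ^ 2)⁻¹)) := by ring
      have h7 : sq n ≤ a/2 := by
        calc sq n ≤ (a/2) * (max (T1 (Sg n)) 0 * (((Real.sqrt (T1 (Sg n))) ^ 2)⁻¹)) := this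
          _ ≤ (a/2) * 1 := by
              apply mul_le_mul_of_nonneg_left hle1 (by linarith)
          _ = a/2 := mul_one _
      linarith
  -- Step C : eventually the scaled bias is < ε/2
  have hbias' : ∀ᶠ n in atTop, |k n * tauCond (tl n) (tw n) (L n)| < ε / 2 := by
    have hc : (0:ℝ) < ε/4 := by linarith
    filter_upwards [hbias.def hc] with n hn
    have h2 : ‖(Real.sqrt (N1 n * T1 (Sg n)))⁻¹‖ = (k n)⁻¹ :=
      Real.norm_of_nonneg (by positivity)
    rw [h2, Real.norm_eq_abs] at hn
    have hkk : k n * (k n)⁻¹ ≤ 1 := by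
      rcases eq_or_ne (k n) 0 with h | h
      · simp [h]
      · rw [mul_inv_cancel₀ h]
    calc |k n * tauCond (tl n) (tw n) (L n)| = k n * |tauCond (tl n) (tw n) (L n)| := by
          rw [abs_mul, abs_of_nonneg (hk0 n)]
      _ ≤ k n * (ε/4 * (k n)⁻¹) := by
          apply mul_le_mul_of_nonneg_left hn (hk0 n)
      _ = ε/4 * (k n * (k n)⁻¹) := by ring
      _ ≤ ε/4 * 1 := by apply mul_le_mul_of_nonneg_left hkk (by linarith)
      _ < ε/2 := by linarith
  -- Step D : the key per-n bound
  have key : ∀ n, |k n * tauCond (tl n) (tw n) (L n)| < ε / 2 →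
      μ n {ω : Ωt n | ε ≤
          |Real.sqrt (N1 n * T1 (Sg n)) *
            (tauCond (tl n) (tw n) (Ycond (L n) (τ n) (E n ω)) - τ n
              - (E n ω (Fin.last (N0 n)) (Fin.last (T0 n))
                  - ∑ s : Fin (T0 n),
                      E n ω (Fin.last (N0 n)) s.castSucc * psiC (Sg n) s))|}
        ≤ ENNReal.ofReal (B n / (ε/2) ^ 2) := by
    intro n hbiasn
    set c : Fin (N0 n + 1) → Fin (T0 n + 1) → ℝ := cvec (tw n) (tl n) (psiC (Sg n)) with hcdef
    set F : Fin (N0 n + 1) → Ωt n → ℝ := fun i ω => ∑ t, c i t * E n ω i t with hFdef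
    set R : Ωt n → ℝ := fun ω => ∑ i, F i ω with hRdef
    have hpt : ∀ ω, tauCond (tl n) (tw n) (Ycond (L n) (τ n) (E n ω)) - τ n
        - (E n ω (Fin.last (N0 n)) (Fin.last (T0 n))
            - ∑ s : Fin (T0 n), E n ω (Fin.last (N0 n)) s.castSucc * psiC (Sg n) s)
        = tauCond (tl n) (tw n) (L n) + R ω := fun ω =>
      tauCond_linear (tl n) (tw n) (L n) (τ n) (E n ω) (psiC (Sg n))
    by_cases hknn : N1 n * T1 (Sg n) ≤ 0
    · have hkz : Real.sqrt (N1 n * T1 (Sg n)) = 0 := Real.sqrt_eq_zero'.mpr hknn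
      have hempty : {ω : Ωt n | ε ≤
          |Real.sqrt (N1 n * T1 (Sg n)) *
            (tauCond (tl n) (tw n) (Ycond (L n) (τ n) (E n ω)) - τ n
              - (E n ω (Fin.last (N0 n)) (Fin.last (T0 n))
                  - ∑ s : Fin (T0 n),
                      E n ω (Fin.last (N0 n)) s.castSucc * psiC (Sg n) s))|} = ∅ := by
        ext ω
        simp only [Set.mem_setOf_eq, Set.mem_empty_iff_false, iff_false, not_le, hkz, zero_mul,
          abs_zero]
        exact hε
      rw [hempty]
      simp
    push_neg at hknn
    have hT1pos : 0 < T1 (Sg n) := by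
      rcases mul_pos_iff.mp hknn with ⟨_, h⟩ | ⟨h, _⟩
      · exact h
      · exact absurd (hN1 n) (not_lt.mpr h.le)
    have hvarpos : 0 < varAR (Sg n) := inv_pos.mp hT1pos
    have hvarT1 : varAR (Sg n) = (T1 (Sg n))⁻¹ := by
      rw [T1, inv_inv]
    -- Gaussian laws for each summand
    have hlaw : ∀ i : Fin (N0 n + 1), Measure.map (F i) (μ n)
        = gaussianReal 0 (Real.toNNReal ((if i = Fin.last (N0 n) then (N1 n)⁻¹ else 1)
            * (c i ⬝ᵥ (Sg n *ᵥ c i)))) := by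
      intro i
      induction i using Fin.lastCases with
      | last =>
          rw [if_pos rfl]
          exact hgaussLast n (c (Fin.last (N0 n)))
      | cast i =>
          rw [if_neg (Fin.castSucc_lt_last i).ne, one_mul]
          exact hgaussCtrl n i (c i.castSucc)
    have hmem : ∀ i, MemLp (F i) 2 (μ n) := fun i => memℒp_of_map_gauss (hlaw i)
    have hmean : ∀ i, ∫ ω, F i ω ∂(μ n) = 0 := fun i => integral_of_map_gauss (hlaw i)
    have hvar : ∀ i, variance (F i) (μ n)
        = ((Real.toNNReal ((if i = Fin.last (N0 n) then (N1 n)⁻¹ else 1)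
            * (c i ⬝ᵥ (Sg n *ᵥ c i)))) : ℝ) :=
      fun i => variance_of_map_gauss (hlaw i)
    -- independence
    have hindep : iIndepFun (m := fun _ => inferInstance) F (μ n) := by
      have hg : ∀ i : Fin (N0 n + 1),
          Measurable (fun v : Fin (T0 n + 1) → ℝ => ∑ t, c i t * v t) :=
        fun i => Finset.measurable_sum _ fun t _ => (measurable_pi_apply t).const_mul _
      exact (hrowindep n).comp _ hg
    have hRsum : R = ∑ i, F i := by
      funext ω
      simp [hRdef, Finset.sum_apply]
    have hvarsum : variance R (μ n) = ∑ i, variance (F i) (μ n) := by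
      rw [hRsum]
      exact IndepFun.variance_sum (fun i _ => hmem i) (fun i _ j _ hij => hindep.indepFun hij)
    have hRmean : ∫ ω, R ω ∂(μ n) = 0 := by
      rw [hRdef]
      rw [integral_finset_sum _ (fun i _ => (hmem i).integrable one_le_two)]
      simp [hmean]
    have hX : MemLp (fun ω => k n * R ω) 2 (μ n) := by
      have h1 : MemLp R 2 (μ n) := by
        rw [hRsum]
        exact memLp_finset_sum' _ (fun i _ => hmem i)
      exact h1.const_mul (k n)
    have hXmean : ∫ ω, k n * R ω ∂(μ n) = 0 := by
      rw [MeasureTheory.integral_const_mul, hRmean, mul_zero]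
    -- quadratic form computations
    have hdotδ : ∀ a : Fin (T0 n) → ℝ, (∀ s, a s = tl n s - psiC (Sg n) s ∨
        a s = psiC (Sg n) s - tl n s) → a ⬝ᵥ a = δ n ^ 2 := by
      intro a ha
      have h1 : δ n ^ 2 = ∑ s, ((tl n - psiC (Sg n)) s) ^ 2 :=
        Real.sq_sqrt (Finset.sum_nonneg fun s _ => sq_nonneg _)
      rw [h1, dotProduct]
      refine Finset.sum_congr rfl fun s _ => ?_
      rcases ha s with h | h <;> rw [h] <;> simp [Pi.sub_apply] <;> ring
    -- variance of the last-row term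
    have hclast : c (Fin.last (N0 n)) = Fin.snoc (fun s => psiC (Sg n) s - tl n s) 0 := by
      rw [hcdef, cvec, Fin.snoc_last]
    have hqlast : c (Fin.last (N0 n)) ⬝ᵥ (Sg n *ᵥ c (Fin.last (N0 n)))
        = (fun s => psiC (Sg n) s - tl n s) ⬝ᵥ (Scc (Sg n) *ᵥ (fun s => psiC (Sg n) s - tl n s)) := by
      rw [hclast]
      exact quad_snoc_zero (Sg n) _
    have hdlast : (fun s => psiC (Sg n) s - tl n s) ⬝ᵥ (fun s => psiC (Sg n) s - tl n s)
        = δ n ^ 2 := hdotδ _ (fun s => Or.inr rfl)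
    have hqlast_nonneg : 0 ≤ c (Fin.last (N0 n)) ⬝ᵥ (Sg n *ᵥ c (Fin.last (N0 n))) := by
      rw [hqlast]
      have h := (hEig' n (fun s => psiC (Sg n) s - tl n s)).1
      have h0 : 0 ≤ (fun s => psiC (Sg n) s - tl n s) ⬝ᵥ (fun s => psiC (Sg n) s - tl n s) := by
        rw [hdlast]; exact sq_nonneg _
      nlinarith
    have hqlast_le : c (Fin.last (N0 n)) ⬝ᵥ (Sg n *ᵥ c (Fin.last (N0 n))) ≤ c2p * δ n ^ 2 := by
      rw [hqlast]
      have h := (hEig' n (fun s => psiC (Sg n) s - tl n s)).2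
      rw [hdlast] at h
      have : c₂ * δ n ^ 2 ≤ c2p * δ n ^ 2 :=
        mul_le_mul_of_nonneg_right (le_max_left _ _) (sq_nonneg _)
      linarith
    have hvarlast : variance (F (Fin.last (N0 n))) (μ n) ≤ (N1 n)⁻¹ * (c2p * δ n ^ 2) := by
      rw [hvar, if_pos rfl]
      rw [Real.coe_toNNReal _ (mul_nonneg (inv_nonneg.mpr (hN1 n).le) hqlast_nonneg)]
      exact mul_le_mul_of_nonneg_left hqlast_le (inv_nonneg.mpr (hN1 n).le)
    -- variance of the control-row terms
    have hvarcast : ∀ i : Fin (N0 n), variance (F i.castSucc) (μ n)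
        ≤ tw n i ^ 2 * (2 * (c2p * δ n ^ 2) + 2 * max (varAR (Sg n)) 0) := by
      intro i
      set u : Fin (T0 n + 1) → ℝ := Fin.snoc (fun s => tl n s - psiC (Sg n) s) 0 with hudef
      set d : Fin (T0 n + 1) → ℝ := Fin.snoc (psiC (Sg n)) (-1) with hddef
      set U : Ωt n → ℝ := fun ω => ∑ t, u t * E n ω i.castSucc t with hUdef
      set D : Ωt n → ℝ := fun ω => ∑ t, d t * E n ω i.castSucc t with hDdef
      have hU : Measure.map U (μ n) = gaussianReal 0 (Real.toNNReal (u ⬝ᵥ (Sg n *ᵥ u))) :=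
        hgaussCtrl n i u
      have hD : Measure.map D (μ n) = gaussianReal 0 (Real.toNNReal (d ⬝ᵥ (Sg n *ᵥ d))) :=
        hgaussCtrl n i d
      have hmemU : MemLp U 2 (μ n) := memℒp_of_map_gauss hU
      have hmemD : MemLp D 2 (μ n) := memℒp_of_map_gauss hD
      have hintU : ∫ ω, U ω ^ 2 ∂(μ n) = ((Real.toNNReal (u ⬝ᵥ (Sg n *ᵥ u))) : ℝ) :=
        integral_sq_of_map_gauss hU
      have hintD : ∫ ω, D ω ^ 2 ∂(μ n) = ((Real.toNNReal (d ⬝ᵥ (Sg n *ᵥ d))) : ℝ) :=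
        integral_sq_of_map_gauss hD
      have hct : ∀ t, c i.castSucc t = tw n i * (u t + d t) := by
        intro t
        have hcs : c i.castSucc = Fin.snoc (fun s => tw n i * tl n s) (-(tw n i)) := by
          rw [hcdef, cvec, Fin.snoc_castSucc]
        rw [hcs]
        induction t using Fin.lastCases with
        | last => simp [hudef, hddef, Fin.snoc_last]
        | cast s =>
            simp [hudef, hddef, Fin.snoc_castSucc]
            try ring
      have hFeq : ∀ ω, F i.castSucc ω = tw n i * (U ω + D ω) := by
        intro ω
        rw [hFdef, hUdef, hDdef]
        simp only
        rw [← Finset.sum_add_distrib, Finset.mul_sum]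
        refine Finset.sum_congr rfl fun t _ => ?_
        rw [hct t]
        ring
      have h1 : variance (F i.castSucc) (μ n) ≤ ∫ ω, F i.castSucc ω ^ 2 ∂(μ n) := by
        have := variance_le_expectation_sq (μ := μ n) (hmem i.castSucc).1
        simpa only [Pi.pow_apply] using this
      have h2 : ∫ ω, F i.castSucc ω ^ 2 ∂(μ n) = tw n i ^ 2 * ∫ ω, (U ω + D ω) ^ 2 ∂(μ n) := by
        rw [← MeasureTheory.integral_const_mul]
        refine integral_congr_ae (ae_of_all _ fun ω => ?_)
        show F i.castSucc ω ^ 2 = tw n i ^ 2 * (U ω + D ω) ^ 2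
        rw [hFeq ω]
        ring
      have h3 : ∫ ω, (U ω + D ω) ^ 2 ∂(μ n)
          ≤ 2 * ((Real.toNNReal (u ⬝ᵥ (Sg n *ᵥ u))) : ℝ)
            + 2 * ((Real.toNNReal (d ⬝ᵥ (Sg n *ᵥ d))) : ℝ) := by
        have hint1 : Integrable (fun ω => (U ω + D ω) ^ 2) (μ n) := by
          have := (hmemU.add hmemD).integrable_sq
          simpa [Pi.add_apply] using this
        have hint2 : Integrable (fun ω => 2 * U ω ^ 2 + 2 * D ω ^ 2) (μ n) :=
          (hmemU.integrable_sq.const_mul 2).add (hmemD.integrable_sq.const_mul 2)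
        have hmono := integral_mono hint1 hint2
          (fun ω => by nlinarith [sq_nonneg (U ω - D ω)])
        rw [integral_add (hmemU.integrable_sq.const_mul 2) (hmemD.integrable_sq.const_mul 2),
          MeasureTheory.integral_const_mul, MeasureTheory.integral_const_mul, hintU, hintD] at hmono
        exact hmono
      have hqu : ((Real.toNNReal (u ⬝ᵥ (Sg n *ᵥ u))) : ℝ) ≤ c2p * δ n ^ 2 := by
        have hq : u ⬝ᵥ (Sg n *ᵥ u)
            = (fun s => tl n s - psiC (Sg n) s) ⬝ᵥ (Scc (Sg n) *ᵥ (fun s => tl n s - psiC (Sg n) s)) := by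
          rw [hudef]
          exact quad_snoc_zero (Sg n) _
        have hd : (fun s => tl n s - psiC (Sg n) s) ⬝ᵥ (fun s => tl n s - psiC (Sg n) s)
            = δ n ^ 2 := hdotδ _ (fun s => Or.inl rfl)
        have h := (hEig' n (fun s => tl n s - psiC (Sg n) s)).2
        rw [hd] at h
        have h2' : c₂ * δ n ^ 2 ≤ c2p * δ n ^ 2 :=
          mul_le_mul_of_nonneg_right (le_max_left _ _) (sq_nonneg _)
        rw [Real.coe_toNNReal']
        rw [hq]
        refine max_le (by linarith) ?_
        have h0 : 0 ≤ c2p * δ n ^ 2 := mul_nonneg (le_max_right _ _) (sq_nonneg _)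
        exact h0
      have hqd : ((Real.toNNReal (d ⬝ᵥ (Sg n *ᵥ d))) : ℝ) ≤ max (varAR (Sg n)) 0 := by
        have : d ⬝ᵥ (Sg n *ᵥ d) = varAR (Sg n) := by
          rw [hddef, varAR]
        rw [Real.coe_toNNReal', this]
      calc variance (F i.castSucc) (μ n) ≤ ∫ ω, F i.castSucc ω ^ 2 ∂(μ n) := h1
        _ = tw n i ^ 2 * ∫ ω, (U ω + D ω) ^ 2 ∂(μ n) := h2
        _ ≤ tw n i ^ 2 * (2 * ((Real.toNNReal (u ⬝ᵥ (Sg n *ᵥ u))) : ℝ)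
              + 2 * ((Real.toNNReal (d ⬝ᵥ (Sg n *ᵥ d))) : ℝ)) :=
            mul_le_mul_of_nonneg_left h3 (sq_nonneg _)
        _ ≤ tw n i ^ 2 * (2 * (c2p * δ n ^ 2) + 2 * max (varAR (Sg n)) 0) := by
            apply mul_le_mul_of_nonneg_left _ (sq_nonneg _)
            have := hqu
            have := hqd
            linarith
    -- total variance bound
    have hWsq : ∑ i, tw n i ^ 2 = W n ^ 2 :=
      (Real.sq_sqrt (Finset.sum_nonneg fun i _ => sq_nonneg _)).symm
    have hvarR : variance R (μ n)
        ≤ (N1 n)⁻¹ * (c2p * δ n ^ 2)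
          + W n ^ 2 * (2 * (c2p * δ n ^ 2) + 2 * max (varAR (Sg n)) 0) := by
      rw [hvarsum, Fin.sum_univ_castSucc]
      have hsumc : ∑ i : Fin (N0 n), variance (F i.castSucc) (μ n)
          ≤ W n ^ 2 * (2 * (c2p * δ n ^ 2) + 2 * max (varAR (Sg n)) 0) := by
        calc ∑ i : Fin (N0 n), variance (F i.castSucc) (μ n)
            ≤ ∑ i : Fin (N0 n), tw n i ^ 2 * (2 * (c2p * δ n ^ 2) + 2 * max (varAR (Sg n)) 0) :=
              Finset.sum_le_sum fun i _ => hvarcast i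
          _ = (∑ i, tw n i ^ 2) * (2 * (c2p * δ n ^ 2) + 2 * max (varAR (Sg n)) 0) :=
              (Finset.sum_mul _ _ _).symm
          _ = W n ^ 2 * (2 * (c2p * δ n ^ 2) + 2 * max (varAR (Sg n)) 0) := by rw [hWsq]
      linarith [hvarlast, hsumc]
    have hmaxT1 : max (varAR (Sg n)) 0 = (T1 (Sg n))⁻¹ := by
      rw [hvarT1]
      exact max_eq_left (inv_pos.mpr hT1pos).le
    have hk2 : k n ^ 2 = N1 n * T1 (Sg n) := Real.sq_sqrt hknn.le
    have hvarX : variance (fun ω => k n * R ω) (μ n) ≤ B n := by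
      have hv1 : variance (fun ω => k n * R ω) (μ n) = k n ^ 2 * variance R (μ n) :=
        variance_const_mul (k n) R (μ n)
      have hv2 : k n ^ 2 * variance R (μ n)
          ≤ (N1 n * T1 (Sg n)) * ((N1 n)⁻¹ * (c2p * δ n ^ 2)
            + W n ^ 2 * (2 * (c2p * δ n ^ 2) + 2 * (T1 (Sg n))⁻¹)) := by
        rw [hk2, ← hmaxT1]
        exact mul_le_mul_of_nonneg_left hvarR (by positivity)
      have harith : (N1 n * T1 (Sg n)) * ((N1 n)⁻¹ * (c2p * δ n ^ 2)
            + W n ^ 2 * (2 * (c2p * δ n ^ 2) + 2 * (T1 (Sg n))⁻¹)) = B n := by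
        simp only [hBdef, hsqdef, hmqdef, max_eq_left hT1pos.le]
        field_simp [(hN1 n).ne', hT1pos.ne']
      rw [hv1]
      rw [harith] at hv2
      exact hv2
    -- Chebyshev and conclusion
    have hcheb := meas_ge_le_variance_div_sq (μ := μ n) hX (half_pos hε)
    have hsub : {ω : Ωt n | ε ≤
          |Real.sqrt (N1 n * T1 (Sg n)) *
            (tauCond (tl n) (tw n) (Ycond (L n) (τ n) (E n ω)) - τ n
              - (E n ω (Fin.last (N0 n)) (Fin.last (T0 n))
                  - ∑ s : Fin (T0 n),
                      E n ω (Fin.last (N0 n)) s.castSucc * psiC (Sg n) s))|}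
        ⊆ {ω : Ωt n | ε / 2 ≤ |k n * R ω - (μ n)[fun ω => k n * R ω]|} := by
      intro ω hω
      simp only [Set.mem_setOf_eq] at hω ⊢
      have hmz : (μ n)[fun ω => k n * R ω] = 0 := hXmean
      rw [hmz, sub_zero]
      rw [hpt ω] at hω
      have habs : |k n * (tauCond (tl n) (tw n) (L n) + R ω)|
          ≤ |k n * tauCond (tl n) (tw n) (L n)| + |k n * R ω| := by
        rw [mul_add]
        exact abs_add_le _ _
      have hkk : k n * (tauCond (tl n) (tw n) (L n) + R ω)
          = Real.sqrt (N1 n * T1 (Sg n)) * (tauCond (tl n) (tw n) (L n) + R ω) := rfl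
      rw [← hkk] at hω
      linarith [hbiasn]
    calc μ n {ω : Ωt n | ε ≤
          |Real.sqrt (N1 n * T1 (Sg n)) *
            (tauCond (tl n) (tw n) (Ycond (L n) (τ n) (E n ω)) - τ n
              - (E n ω (Fin.last (N0 n)) (Fin.last (T0 n))
                  - ∑ s : Fin (T0 n),
                      E n ω (Fin.last (N0 n)) s.castSucc * psiC (Sg n) s))|}
        ≤ μ n {ω : Ωt n | ε / 2 ≤ |k n * R ω - (μ n)[fun ω => k n * R ω]|} :=
          measure_mono hsub
      _ ≤ ENNReal.ofReal (variance (fun ω => k n * R ω) (μ n) / (ε / 2) ^ 2) := hcheb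
      _ ≤ ENNReal.ofReal (B n / (ε / 2) ^ 2) := by
          apply ENNReal.ofReal_le_ofReal
          exact (div_le_div_iff_of_pos_right (pow_pos (by linarith : (0:ℝ) < ε/2) 2)).mpr hvarX

  -- Step E : squeeze
  have hB : Tendsto B atTop (nhds 0) := by
    have h1 := (hs.const_mul c2p).add (((hm.mul hs).const_mul (2 * c2p)).add (hm.const_mul 2))
    rw [hBdef]
    convert h1 using 2
    ring
  have hBound : Tendsto (fun n => ENNReal.ofReal (B n / (ε/2) ^ 2)) atTop (nhds 0) := by
    have h2 := ENNReal.tendsto_ofReal (hB.div_const ((ε/2) ^ 2))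
    convert h2 using 2
    simp
  refine tendsto_of_tendsto_of_tendsto_of_le_of_le' tendsto_const_nhds hBound
    (Eventually.of_forall fun n => zero_le) ?_
  filter_upwards [hbias'] with n hn
  exact key n hn

end SDIDCond
end
end

section
/- Let A be a real m×n matrix with singular values σ₁(A) ≥ σ₂(A) ≥ … (setting σ_j(A) = 0 for j > min(m,n)), and let x ∈ ℝᵐ, y ∈ ℝⁿ satisfy ‖x'A‖ ≤ r_x, ‖Ay‖ ≤ r_y, ‖x‖ ≤ s_x, ‖y‖ ≤ s_y for nonnegative reals r_x, r_y, s_x, s_y. Then for every positive integer k with σ_k(A) > 0, |x'Ay| ≤ σ_k(A)^{−1}·r_x·r_y + σ_{k+1}(A)·s_x·s_y. -/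
open Matrix

noncomputable section

namespace SDID

/-- Euclidean norm of a finite vector. -/
def norm2 {k : ℕ} (v : Fin k → ℝ) : ℝ := Real.sqrt (∑ i, v i ^ 2)

lemma mulVec_dot_mulVec {q : ℕ} (V : Matrix (Fin q) (Fin q) ℝ) (hV : Vᵀ * V = 1)
    (w : Fin q → ℝ) : (V *ᵥ w) ⬝ᵥ (V *ᵥ w) = w ⬝ᵥ w := by
  rw [Matrix.dotProduct_mulVec, ← Matrix.vecMul_transpose, Matrix.vecMul_vecMul, hV,
    Matrix.vecMul_one]

lemma dot_self_eq_sum_sq {q : ℕ} (a : Fin q → ℝ) : a ⬝ᵥ a = ∑ i, a i ^ 2 := by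
  simp [dotProduct, sq]

lemma sum_sq_le_of_support (N : ℕ) (f : ℕ → ℝ) (h0 : ∀ t, N ≤ t → f t = 0) (s : Finset ℕ) :
    ∑ t ∈ s, f t ^ 2 ≤ ∑ t ∈ Finset.range N, f t ^ 2 := by
  have h1 : ∑ t ∈ s, f t ^ 2 = ∑ t ∈ s ∩ Finset.range N, f t ^ 2 := by
    refine (Finset.sum_subset Finset.inter_subset_left ?_).symm
    intro t ht hnt
    have : N ≤ t := by
      by_contra hc
      exact hnt (Finset.mem_inter.2 ⟨ht, Finset.mem_range.2 (by omega)⟩)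
    rw [h0 t this]; ring
  rw [h1]
  exact Finset.sum_le_sum_of_subset_of_nonneg Finset.inter_subset_right
    (fun _ _ _ => sq_nonneg _)

set_option maxHeartbeats 1000000 in
/-- let `A` have singular values `σ 1 ≥ σ 2 ≥ …` (here exhibited via a
singular value decomposition `A = U D Vᵀ`, with `σ j = 0` for `j > min m n`), and let
`x, y` satisfy `‖x'A‖ ≤ r_x`, `‖Ay‖ ≤ r_y`, `‖x‖ ≤ s_x`, `‖y‖ ≤ s_y`.  Then for every
positive integer `k` with `σ k > 0`,
`|x'Ay| ≤ σ k⁻¹·r_x·r_y + σ (k+1)·s_x·s_y`. -/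
theorem singular_value_bilinear_bound (m n : ℕ)
    (A : Matrix (Fin m) (Fin n) ℝ) (σ : ℕ → ℝ)
    (U : Matrix (Fin m) (Fin m) ℝ) (V : Matrix (Fin n) (Fin n) ℝ)
    (hU : Uᵀ * U = 1) (hV : Vᵀ * V = 1)
    (hA : A = U * (Matrix.of fun (i : Fin m) (j : Fin n) =>
        if (i : ℕ) = (j : ℕ) then σ ((i : ℕ) + 1) else 0) * Vᵀ)
    (hmono : ∀ j k : ℕ, j ≤ k → σ k ≤ σ j)
    (hnonneg : ∀ j, 0 ≤ σ j)
    (hzero : ∀ j, min m n < j → σ j = 0)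
    (x : Fin m → ℝ) (y : Fin n → ℝ) (rx ry sx sy : ℝ)
    (hrx : norm2 (A.vecMul x) ≤ rx) (hry : norm2 (A *ᵥ y) ≤ ry)
    (hsx : norm2 x ≤ sx) (hsy : norm2 y ≤ sy)
    (k : ℕ) (hk : 1 ≤ k) (hσk : 0 < σ k) :
    |x ⬝ᵥ (A *ᵥ y)| ≤ (σ k)⁻¹ * rx * ry + σ (k + 1) * sx * sy := by
  classical
  simp only [norm2] at hrx hry hsx hsy
  set D : Matrix (Fin m) (Fin n) ℝ := Matrix.of fun (i : Fin m) (j : Fin n) =>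
      if (i : ℕ) = (j : ℕ) then σ ((i : ℕ) + 1) else 0 with hDdef
  set u : Fin m → ℝ := x ᵥ* U with hu
  set v : Fin n → ℝ := y ᵥ* V with hv
  set U' : ℕ → ℝ := fun t => if h : t < m then u ⟨t, h⟩ else 0 with hU'
  set V' : ℕ → ℝ := fun t => if h : t < n then v ⟨t, h⟩ else 0 with hV'
  -- bounds on k
  have hkmn : k ≤ min m n := by
    by_contra h
    exact hσk.ne' (hzero k (by omega))
  have hkm : k ≤ m := le_trans hkmn (min_le_left _ _)
  have hkn : k ≤ n := le_trans hkmn (min_le_right _ _)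
  -- nonnegativity of bounds
  have rx0 : 0 ≤ rx := le_trans (Real.sqrt_nonneg _) hrx
  have ry0 : 0 ≤ ry := le_trans (Real.sqrt_nonneg _) hry
  have sx0 : 0 ≤ sx := le_trans (Real.sqrt_nonneg _) hsx
  have sy0 : 0 ≤ sy := le_trans (Real.sqrt_nonneg _) hsy
  -- coordinate formulas
  have hui : ∀ i : Fin m, u i = U' (i : ℕ) := by
    intro i; simp [hU', i.isLt]
  have hvj : ∀ j : Fin n, v j = V' (j : ℕ) := by
    intro j; simp [hV', j.isLt]
  have hU'0 : ∀ t, m ≤ t → U' t = 0 := by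
    intro t ht; rw [hU']; exact dif_neg (by omega)
  have hV'0 : ∀ t, n ≤ t → V' t = 0 := by
    intro t ht; rw [hV']; exact dif_neg (by omega)
  have hDv : ∀ i : Fin m, (D *ᵥ v) i = σ ((i : ℕ) + 1) * V' (i : ℕ) := by
    intro i
    show ∑ j, D i j * v j = _
    by_cases h : (i : ℕ) < n
    · rw [Finset.sum_eq_single (⟨(i : ℕ), h⟩ : Fin n)]
      · simp [hDdef, hV', h]
      · intro b _ hb
        have hne : (i : ℕ) ≠ (b : ℕ) := fun he => hb (by ext; exact he.symm)
        simp [hDdef, hne]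
      · intro habs; exact absurd (Finset.mem_univ _) habs
    · have hz : ∀ j : Fin n, D i j * v j = 0 := by
        intro j
        have hne : (i : ℕ) ≠ (j : ℕ) := by have := j.isLt; omega
        simp [hDdef, hne]
      rw [Finset.sum_congr rfl (fun j _ => hz j)]
      simp [hV', h]
  have hw : ∀ j : Fin n, (u ᵥ* D) j = σ ((j : ℕ) + 1) * U' (j : ℕ) := by
    intro j
    show ∑ i, u i * D i j = _
    by_cases h : (j : ℕ) < m
    · rw [Finset.sum_eq_single (⟨(j : ℕ), h⟩ : Fin m)]
      · simp [hDdef, hU', h, mul_comm]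
      · intro b _ hb
        have hne : (b : ℕ) ≠ (j : ℕ) := fun he => hb (by ext; exact he)
        simp [hDdef, hne]
      · intro habs; exact absurd (Finset.mem_univ _) habs
    · have hz : ∀ i : Fin m, u i * D i j = 0 := by
        intro i
        have hne : (i : ℕ) ≠ (j : ℕ) := by have := i.isLt; omega
        simp [hDdef, hne]
      rw [Finset.sum_congr rfl (fun i _ => hz i)]
      simp [hU', h]
  -- the bilinear form as a sum
  have hS : x ⬝ᵥ (A *ᵥ y) = ∑ t ∈ Finset.range m, σ (t + 1) * U' t * V' t := by
    have h1 : x ⬝ᵥ (A *ᵥ y) = u ⬝ᵥ (D *ᵥ v) := by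
      rw [hA, ← Matrix.mulVec_mulVec, ← Matrix.mulVec_mulVec, Matrix.dotProduct_mulVec,
        Matrix.mulVec_transpose, ← hu, ← hv]
    rw [h1, ← Fin.sum_univ_eq_sum_range (fun t => σ (t + 1) * U' t * V' t) m]
    refine Finset.sum_congr rfl (fun i _ => ?_)
    rw [hDv i, hui i]; ring
  -- norm identities
  have hxA : ∑ j, (x ᵥ* A) j ^ 2 = ∑ t ∈ Finset.range n, (σ (t + 1) * U' t) ^ 2 := by
    have h2 : x ᵥ* A = V *ᵥ (u ᵥ* D) := by
      rw [hA, ← Matrix.vecMul_vecMul, ← Matrix.vecMul_vecMul, Matrix.vecMul_transpose, ← hu]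
    rw [← dot_self_eq_sum_sq, h2, mulVec_dot_mulVec V hV, dot_self_eq_sum_sq,
      ← Fin.sum_univ_eq_sum_range (fun t => (σ (t + 1) * U' t) ^ 2) n]
    exact Finset.sum_congr rfl (fun j _ => by rw [hw j])
  have hAy : ∑ i, (A *ᵥ y) i ^ 2 = ∑ t ∈ Finset.range m, (σ (t + 1) * V' t) ^ 2 := by
    have h2 : A *ᵥ y = U *ᵥ (D *ᵥ v) := by
      rw [hA, ← Matrix.mulVec_mulVec, ← Matrix.mulVec_mulVec, Matrix.mulVec_transpose, ← hv]
    rw [← dot_self_eq_sum_sq, h2, mulVec_dot_mulVec U hU, dot_self_eq_sum_sq,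
      ← Fin.sum_univ_eq_sum_range (fun t => (σ (t + 1) * V' t) ^ 2) m]
    exact Finset.sum_congr rfl (fun i _ => by rw [hDv i])
  have hxx : ∑ t ∈ Finset.range m, U' t ^ 2 = ∑ i, x i ^ 2 := by
    have h2 : u ⬝ᵥ u = x ⬝ᵥ x := by
      rw [hu, ← Matrix.mulVec_transpose]
      have hUU : (Uᵀ)ᵀ * Uᵀ = 1 := by
        rw [Matrix.transpose_transpose]; exact mul_eq_one_comm.mp hU
      exact mulVec_dot_mulVec Uᵀ hUU x
    rw [← dot_self_eq_sum_sq, ← h2, dot_self_eq_sum_sq,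
      ← Fin.sum_univ_eq_sum_range (fun t => U' t ^ 2) m]
    exact Finset.sum_congr rfl (fun i _ => by rw [hui i])
  have hyy : ∑ t ∈ Finset.range n, V' t ^ 2 = ∑ j, y j ^ 2 := by
    have h2 : v ⬝ᵥ v = y ⬝ᵥ y := by
      rw [hv, ← Matrix.mulVec_transpose]
      have hVV : (Vᵀ)ᵀ * Vᵀ = 1 := by
        rw [Matrix.transpose_transpose]; exact mul_eq_one_comm.mp hV
      exact mulVec_dot_mulVec Vᵀ hVV y
    rw [← dot_self_eq_sum_sq, ← h2, dot_self_eq_sum_sq,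
      ← Fin.sum_univ_eq_sum_range (fun t => V' t ^ 2) n]
    exact Finset.sum_congr rfl (fun j _ => by rw [hvj j])
  -- squared bounds
  have sqb : ∀ (S : ℝ) (r : ℝ), 0 ≤ S → Real.sqrt S ≤ r → S ≤ r ^ 2 := by
    intro S r h0 hle
    rw [← Real.sq_sqrt h0]
    exact pow_le_pow_left₀ (Real.sqrt_nonneg _) hle 2
  have hrx2 : ∑ t ∈ Finset.range n, (σ (t + 1) * U' t) ^ 2 ≤ rx ^ 2 := by
    rw [← hxA]
    exact sqb _ _ (Finset.sum_nonneg fun _ _ => sq_nonneg _) hrx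
  have hry2 : ∑ t ∈ Finset.range m, (σ (t + 1) * V' t) ^ 2 ≤ ry ^ 2 := by
    rw [← hAy]
    exact sqb _ _ (Finset.sum_nonneg fun _ _ => sq_nonneg _) hry
  have hsx2 : ∑ t ∈ Finset.range m, U' t ^ 2 ≤ sx ^ 2 := by
    rw [hxx]
    exact sqb _ _ (Finset.sum_nonneg fun _ _ => sq_nonneg _) hsx
  have hsy2 : ∑ t ∈ Finset.range n, V' t ^ 2 ≤ sy ^ 2 := by
    rw [hyy]
    exact sqb _ _ (Finset.sum_nonneg fun _ _ => sq_nonneg _) hsy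
  -- split the sum
  have hsplit : ∑ t ∈ Finset.range m, σ (t + 1) * U' t * V' t =
      (∑ t ∈ Finset.range k, σ (t + 1) * U' t * V' t) +
      ∑ t ∈ Finset.Ico k m, σ (t + 1) * U' t * V' t := by
    rw [Finset.range_eq_Ico, ← Finset.sum_Ico_consecutive _ (Nat.zero_le k) hkm,
      ← Finset.range_eq_Ico]
  -- bound the head
  have hb1 : |∑ t ∈ Finset.range k, σ (t + 1) * U' t * V' t| ≤ (σ k)⁻¹ * (rx * ry) := by
    have step1 : |∑ t ∈ Finset.range k, σ (t + 1) * U' t * V' t| ≤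
        ∑ t ∈ Finset.range k, (σ k)⁻¹ * ((σ (t + 1) * |U' t|) * (σ (t + 1) * |V' t|)) := by
      refine le_trans (Finset.abs_sum_le_sum_abs _ _) (Finset.sum_le_sum fun t ht => ?_)
      have hσt : σ k ≤ σ (t + 1) := hmono (t + 1) k (by
        have := Finset.mem_range.mp ht; omega)
      have key : σ (t + 1) ≤ (σ k)⁻¹ * (σ (t + 1) * σ (t + 1)) := by
        rw [le_inv_mul_iff₀ hσk]
        exact mul_le_mul_of_nonneg_right hσt (hnonneg _)
      calc |σ (t + 1) * U' t * V' t| = σ (t + 1) * (|U' t| * |V' t|) := by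
            rw [abs_mul, abs_mul, abs_of_nonneg (hnonneg _)]; ring
        _ ≤ ((σ k)⁻¹ * (σ (t + 1) * σ (t + 1))) * (|U' t| * |V' t|) :=
            mul_le_mul_of_nonneg_right key (by positivity)
        _ = (σ k)⁻¹ * ((σ (t + 1) * |U' t|) * (σ (t + 1) * |V' t|)) := by ring
    rw [← Finset.mul_sum] at step1
    refine le_trans step1 (mul_le_mul_of_nonneg_left ?_ (by positivity))
    -- Cauchy–Schwarz
    have hCS := Finset.sum_mul_sq_le_sq_mul_sq (Finset.range k)
      (fun t => σ (t + 1) * |U' t|) (fun t => σ (t + 1) * |V' t|)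
    have hf : ∑ t ∈ Finset.range k, (σ (t + 1) * |U' t|) ^ 2 ≤ rx ^ 2 := by
      calc ∑ t ∈ Finset.range k, (σ (t + 1) * |U' t|) ^ 2
          = ∑ t ∈ Finset.range k, (σ (t + 1) * U' t) ^ 2 :=
            Finset.sum_congr rfl (fun t _ => by rw [mul_pow, mul_pow, sq_abs])
        _ ≤ ∑ t ∈ Finset.range n, (σ (t + 1) * U' t) ^ 2 :=
            Finset.sum_le_sum_of_subset_of_nonneg (Finset.range_subset_range.2 hkn)
              (fun _ _ _ => sq_nonneg _)
        _ ≤ rx ^ 2 := hrx2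
    have hg : ∑ t ∈ Finset.range k, (σ (t + 1) * |V' t|) ^ 2 ≤ ry ^ 2 := by
      calc ∑ t ∈ Finset.range k, (σ (t + 1) * |V' t|) ^ 2
          = ∑ t ∈ Finset.range k, (σ (t + 1) * V' t) ^ 2 :=
            Finset.sum_congr rfl (fun t _ => by rw [mul_pow, mul_pow, sq_abs])
        _ ≤ ∑ t ∈ Finset.range m, (σ (t + 1) * V' t) ^ 2 :=
            Finset.sum_le_sum_of_subset_of_nonneg (Finset.range_subset_range.2 hkm)
              (fun _ _ _ => sq_nonneg _)
        _ ≤ ry ^ 2 := hry2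
    have hfg0 : 0 ≤ ∑ t ∈ Finset.range k, (σ (t + 1) * |U' t|) * (σ (t + 1) * |V' t|) :=
      Finset.sum_nonneg fun t _ => mul_nonneg (mul_nonneg (hnonneg _) (abs_nonneg _))
        (mul_nonneg (hnonneg _) (abs_nonneg _))
    have hg0 : 0 ≤ ∑ t ∈ Finset.range k, (σ (t + 1) * |V' t|) ^ 2 :=
      Finset.sum_nonneg fun _ _ => sq_nonneg _
    nlinarith [hCS, mul_le_mul hf hg hg0 (sq_nonneg rx), mul_nonneg rx0 ry0]
  -- bound the tail
  have hb2 : |∑ t ∈ Finset.Ico k m, σ (t + 1) * U' t * V' t| ≤ σ (k + 1) * (sx * sy) := by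
    have step1 : |∑ t ∈ Finset.Ico k m, σ (t + 1) * U' t * V' t| ≤
        ∑ t ∈ Finset.Ico k m, σ (k + 1) * (|U' t| * |V' t|) := by
      refine le_trans (Finset.abs_sum_le_sum_abs _ _) (Finset.sum_le_sum fun t ht => ?_)
      have hσt : σ (t + 1) ≤ σ (k + 1) := hmono (k + 1) (t + 1) (by
        have := (Finset.mem_Ico.mp ht).1; omega)
      calc |σ (t + 1) * U' t * V' t| = σ (t + 1) * (|U' t| * |V' t|) := by
            rw [abs_mul, abs_mul, abs_of_nonneg (hnonneg _)]; ring
        _ ≤ σ (k + 1) * (|U' t| * |V' t|) :=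
            mul_le_mul_of_nonneg_right hσt (by positivity)
    rw [← Finset.mul_sum] at step1
    refine le_trans step1 (mul_le_mul_of_nonneg_left ?_ (hnonneg _))
    have hCS := Finset.sum_mul_sq_le_sq_mul_sq (Finset.Ico k m)
      (fun t => |U' t|) (fun t => |V' t|)
    have hf : ∑ t ∈ Finset.Ico k m, |U' t| ^ 2 ≤ sx ^ 2 := by
      calc ∑ t ∈ Finset.Ico k m, |U' t| ^ 2 = ∑ t ∈ Finset.Ico k m, U' t ^ 2 :=
            Finset.sum_congr rfl (fun t _ => sq_abs _)
        _ ≤ ∑ t ∈ Finset.range m, U' t ^ 2 := sum_sq_le_of_support m U' hU'0 _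
        _ ≤ sx ^ 2 := hsx2
    have hg : ∑ t ∈ Finset.Ico k m, |V' t| ^ 2 ≤ sy ^ 2 := by
      calc ∑ t ∈ Finset.Ico k m, |V' t| ^ 2 = ∑ t ∈ Finset.Ico k m, V' t ^ 2 :=
            Finset.sum_congr rfl (fun t _ => sq_abs _)
        _ ≤ ∑ t ∈ Finset.range n, V' t ^ 2 := sum_sq_le_of_support n V' hV'0 _
        _ ≤ sy ^ 2 := hsy2
    have hfg0 : 0 ≤ ∑ t ∈ Finset.Ico k m, |U' t| * |V' t| :=
      Finset.sum_nonneg fun t _ => by positivity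
    have hg0 : 0 ≤ ∑ t ∈ Finset.Ico k m, |V' t| ^ 2 :=
      Finset.sum_nonneg fun _ _ => sq_nonneg _
    nlinarith [hCS, mul_le_mul hf hg hg0 (sq_nonneg sx), mul_nonneg sx0 sy0]
  calc |x ⬝ᵥ (A *ᵥ y)| = |(∑ t ∈ Finset.range k, σ (t + 1) * U' t * V' t) +
        ∑ t ∈ Finset.Ico k m, σ (t + 1) * U' t * V' t| := by rw [hS, hsplit]
    _ ≤ |∑ t ∈ Finset.range k, σ (t + 1) * U' t * V' t| +
        |∑ t ∈ Finset.Ico k m, σ (t + 1) * U' t * V' t| := abs_add_le _ _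
    _ ≤ (σ k)⁻¹ * (rx * ry) + σ (k + 1) * (sx * sy) := add_le_add hb1 hb2
    _ = (σ k)⁻¹ * rx * ry + σ (k + 1) * sx * sy := by ring

end SDID
end
end

section
/- In the block panel design, the bias term B(ω,λ) = ω_tr'L_{tr,post}λ_post − ω_co'L_{co,post}λ_post − ω_tr'L_{tr,pre}λ_pre + ω_co'L_{co,pre}λ_pre vanishes for ω ∈ Ω and λ ∈ Λ under either of the following conditions (double robustness): (a) the unit weights exactly balance L up to a constant, i.e. there exists c ∈ ℝ with ω_tr'L_{tr,t} − ω_co'L_{co,t} = c for every time period t; or (b) the time weights exactly balance L up to a constant, i.e. there exists d ∈ ℝ with L_{i,post}λ_post − L_{i,pre}λ_pre = d for every unit i. In particular, if L is additive, L_{it} = α_i + β_t for some vectors α, β, then B(ω,λ) = 0 for all ω ∈ Ω and λ ∈ Λ. -/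
open Filter MeasureTheory ProbabilityTheory Matrix Real Asymptotics

noncomputable section

namespace SDID

/-- The set Ω of unit weights: nonnegative, control weights sum to one,
treated weights all equal to `1/N_tr`. -/
def OmegaSet (Nco Ntr : ℕ) : Set (Fin (Nco + Ntr) → ℝ) :=
  {w | (∀ i, 0 ≤ w i) ∧ (∑ i : Fin Nco, w (Fin.castAdd Ntr i)) = 1 ∧
    ∀ i : Fin Ntr, w (Fin.natAdd Nco i) = (Ntr : ℝ)⁻¹}

/-- The set Λ of time weights: nonnegative, pre-treatment weights sum to one,
post-treatment weights all equal to `1/T_post`. -/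
def LambdaSet (Tpre Tpost : ℕ) : Set (Fin (Tpre + Tpost) → ℝ) :=
  {l | (∀ t, 0 ≤ l t) ∧ (∑ t : Fin Tpre, l (Fin.castAdd Tpost t)) = 1 ∧
    ∀ t : Fin Tpost, l (Fin.natAdd Tpre t) = (Tpost : ℝ)⁻¹}

/-- Weighted double-differencing estimator
`τ̂(ω,λ) = ω_tr'Y_{tr,post}λ_post − ω_co'Y_{co,post}λ_post − ω_tr'Y_{tr,pre}λ_pre + ω_co'Y_{co,pre}λ_pre`. -/
def tauWDD {Nco Ntr Tpre Tpost : ℕ} (w : Fin (Nco + Ntr) → ℝ) (l : Fin (Tpre + Tpost) → ℝ)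
    (Y : Matrix (Fin (Nco + Ntr)) (Fin (Tpre + Tpost)) ℝ) : ℝ :=
  (∑ i : Fin Ntr, ∑ t : Fin Tpost,
      w (Fin.natAdd Nco i) * Y (Fin.natAdd Nco i) (Fin.natAdd Tpre t) * l (Fin.natAdd Tpre t))
  - (∑ i : Fin Nco, ∑ t : Fin Tpost,
      w (Fin.castAdd Ntr i) * Y (Fin.castAdd Ntr i) (Fin.natAdd Tpre t) * l (Fin.natAdd Tpre t))
  - (∑ i : Fin Ntr, ∑ t : Fin Tpre,
      w (Fin.natAdd Nco i) * Y (Fin.natAdd Nco i) (Fin.castAdd Tpost t) * l (Fin.castAdd Tpost t))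
  + (∑ i : Fin Nco, ∑ t : Fin Tpre,
      w (Fin.castAdd Ntr i) * Y (Fin.castAdd Ntr i) (Fin.castAdd Tpost t) * l (Fin.castAdd Tpost t))

/-- Block treatment assignment indicator `W_{it} = 1{i > N_co, t > T_pre}`. -/
def Wind (Nco Ntr Tpre Tpost : ℕ) : Matrix (Fin (Nco + Ntr)) (Fin (Tpre + Tpost)) ℝ :=
  fun i t => if Nco ≤ (i : ℕ) ∧ Tpre ≤ (t : ℕ) then 1 else 0

/-- Outcome matrix `Y = L + W ∘ τ + E`. -/
def Ymat {Nco Ntr Tpre Tpost : ℕ} (L τm Em : Matrix (Fin (Nco + Ntr)) (Fin (Tpre + Tpost)) ℝ) :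
    Matrix (Fin (Nco + Ntr)) (Fin (Tpre + Tpost)) ℝ :=
  fun i t => L i t + Wind Nco Ntr Tpre Tpost i t * τm i t + Em i t

/-- The estimand: average treatment effect on treated cells. -/
def taubar {Nco Ntr Tpre Tpost : ℕ} (τm : Matrix (Fin (Nco + Ntr)) (Fin (Tpre + Tpost)) ℝ) : ℝ :=
  ((Ntr : ℝ) * Tpost)⁻¹ *
    ∑ i : Fin Ntr, ∑ t : Fin Tpost, τm (Fin.natAdd Nco i) (Fin.natAdd Tpre t)


/-- double robustness of the bias term.  `B(ω,λ) = tauWDD w l L`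
vanishes if (a) the unit weights balance `L` up to a constant across all time periods,
or (b) the time weights balance `L` up to a constant across all units; in particular
it vanishes whenever `L` is additive, `L i t = α i + β t`. -/
theorem bias_double_robustness {Nco Ntr Tpre Tpost : ℕ}
    (hNtr : 1 ≤ Ntr) (hTpost : 1 ≤ Tpost)
    (L : Matrix (Fin (Nco + Ntr)) (Fin (Tpre + Tpost)) ℝ)
    (w : Fin (Nco + Ntr) → ℝ) (l : Fin (Tpre + Tpost) → ℝ)
    (hw : w ∈ OmegaSet Nco Ntr) (hl : l ∈ LambdaSet Tpre Tpost) :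
    ((∃ c : ℝ, ∀ t : Fin (Tpre + Tpost),
        (∑ i : Fin Ntr, w (Fin.natAdd Nco i) * L (Fin.natAdd Nco i) t)
          - (∑ i : Fin Nco, w (Fin.castAdd Ntr i) * L (Fin.castAdd Ntr i) t) = c) →
      tauWDD w l L = 0)
    ∧ ((∃ d : ℝ, ∀ i : Fin (Nco + Ntr),
        (∑ t : Fin Tpost, L i (Fin.natAdd Tpre t) * l (Fin.natAdd Tpre t))
          - (∑ t : Fin Tpre, L i (Fin.castAdd Tpost t) * l (Fin.castAdd Tpost t)) = d) →
      tauWDD w l L = 0)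
    ∧ ((∃ (a : Fin (Nco + Ntr) → ℝ) (b : Fin (Tpre + Tpost) → ℝ),
        ∀ i t, L i t = a i + b t) →
      tauWDD w l L = 0) := by
  obtain ⟨hwpos, hwco, hwtr⟩ := hw
  obtain ⟨hlpos, hlpre, hlpost⟩ := hl
  have hNtr' : (Ntr : ℝ) ≠ 0 := Nat.cast_ne_zero.mpr (by omega)
  have hTpost' : (Tpost : ℝ) ≠ 0 := Nat.cast_ne_zero.mpr (by omega)
  have hwtrsum : ∑ i : Fin Ntr, w (Fin.natAdd Nco i) = 1 := by
    simp [hwtr, Finset.sum_const, nsmul_eq_mul, mul_inv_cancel₀ hNtr']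
  have hlpostsum : ∑ t : Fin Tpost, l (Fin.natAdd Tpre t) = 1 := by
    simp [hlpost, Finset.sum_const, nsmul_eq_mul, mul_inv_cancel₀ hTpost']
  have parta : (∃ c : ℝ, ∀ t : Fin (Tpre + Tpost),
        (∑ i : Fin Ntr, w (Fin.natAdd Nco i) * L (Fin.natAdd Nco i) t)
          - (∑ i : Fin Nco, w (Fin.castAdd Ntr i) * L (Fin.castAdd Ntr i) t) = c) →
      tauWDD w l L = 0 := by
    rintro ⟨c, hc⟩
    unfold tauWDD
    have e1 : (∑ i : Fin Ntr, ∑ t : Fin Tpost,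
        w (Fin.natAdd Nco i) * L (Fin.natAdd Nco i) (Fin.natAdd Tpre t) * l (Fin.natAdd Tpre t))
        - (∑ i : Fin Nco, ∑ t : Fin Tpost,
        w (Fin.castAdd Ntr i) * L (Fin.castAdd Ntr i) (Fin.natAdd Tpre t) * l (Fin.natAdd Tpre t))
        = c := by
      rw [Finset.sum_comm (γ := Fin Ntr), Finset.sum_comm (γ := Fin Nco),
        ← Finset.sum_sub_distrib]
      have : ∀ t : Fin Tpost,
          ((∑ i : Fin Ntr, w (Fin.natAdd Nco i) * L (Fin.natAdd Nco i) (Fin.natAdd Tpre t) * l (Fin.natAdd Tpre t))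
          - ∑ i : Fin Nco, w (Fin.castAdd Ntr i) * L (Fin.castAdd Ntr i) (Fin.natAdd Tpre t) * l (Fin.natAdd Tpre t))
          = c * l (Fin.natAdd Tpre t) := by
        intro t
        rw [← Finset.sum_mul, ← Finset.sum_mul, ← sub_mul, hc]
      rw [Finset.sum_congr rfl (fun t _ => this t), ← Finset.mul_sum, hlpostsum, mul_one]
    have e2 : (∑ i : Fin Ntr, ∑ t : Fin Tpre,
        w (Fin.natAdd Nco i) * L (Fin.natAdd Nco i) (Fin.castAdd Tpost t) * l (Fin.castAdd Tpost t))
        - (∑ i : Fin Nco, ∑ t : Fin Tpre,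
        w (Fin.castAdd Ntr i) * L (Fin.castAdd Ntr i) (Fin.castAdd Tpost t) * l (Fin.castAdd Tpost t))
        = c := by
      rw [Finset.sum_comm (γ := Fin Ntr), Finset.sum_comm (γ := Fin Nco),
        ← Finset.sum_sub_distrib]
      have : ∀ t : Fin Tpre,
          ((∑ i : Fin Ntr, w (Fin.natAdd Nco i) * L (Fin.natAdd Nco i) (Fin.castAdd Tpost t) * l (Fin.castAdd Tpost t))
          - ∑ i : Fin Nco, w (Fin.castAdd Ntr i) * L (Fin.castAdd Ntr i) (Fin.castAdd Tpost t) * l (Fin.castAdd Tpost t))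
          = c * l (Fin.castAdd Tpost t) := by
        intro t
        rw [← Finset.sum_mul, ← Finset.sum_mul, ← sub_mul, hc]
      rw [Finset.sum_congr rfl (fun t _ => this t), ← Finset.mul_sum, hlpre, mul_one]
    linarith
  have partb : (∃ d : ℝ, ∀ i : Fin (Nco + Ntr),
        (∑ t : Fin Tpost, L i (Fin.natAdd Tpre t) * l (Fin.natAdd Tpre t))
          - (∑ t : Fin Tpre, L i (Fin.castAdd Tpost t) * l (Fin.castAdd Tpost t)) = d) →
      tauWDD w l L = 0 := by
    rintro ⟨d, hd⟩
    unfold tauWDD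
    have e1 : (∑ i : Fin Ntr, ∑ t : Fin Tpost,
        w (Fin.natAdd Nco i) * L (Fin.natAdd Nco i) (Fin.natAdd Tpre t) * l (Fin.natAdd Tpre t))
        - (∑ i : Fin Ntr, ∑ t : Fin Tpre,
        w (Fin.natAdd Nco i) * L (Fin.natAdd Nco i) (Fin.castAdd Tpost t) * l (Fin.castAdd Tpost t))
        = d := by
      rw [← Finset.sum_sub_distrib]
      have : ∀ i : Fin Ntr,
          ((∑ t : Fin Tpost, w (Fin.natAdd Nco i) * L (Fin.natAdd Nco i) (Fin.natAdd Tpre t) * l (Fin.natAdd Tpre t))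
          - ∑ t : Fin Tpre, w (Fin.natAdd Nco i) * L (Fin.natAdd Nco i) (Fin.castAdd Tpost t) * l (Fin.castAdd Tpost t))
          = w (Fin.natAdd Nco i) * d := by
        intro i
        simp only [mul_assoc]
        rw [← Finset.mul_sum, ← Finset.mul_sum, ← mul_sub, hd]
      rw [Finset.sum_congr rfl (fun i _ => this i), ← Finset.sum_mul, hwtrsum, one_mul]
    have e2 : (∑ i : Fin Nco, ∑ t : Fin Tpost,
        w (Fin.castAdd Ntr i) * L (Fin.castAdd Ntr i) (Fin.natAdd Tpre t) * l (Fin.natAdd Tpre t))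
        - (∑ i : Fin Nco, ∑ t : Fin Tpre,
        w (Fin.castAdd Ntr i) * L (Fin.castAdd Ntr i) (Fin.castAdd Tpost t) * l (Fin.castAdd Tpost t))
        = d := by
      rw [← Finset.sum_sub_distrib]
      have : ∀ i : Fin Nco,
          ((∑ t : Fin Tpost, w (Fin.castAdd Ntr i) * L (Fin.castAdd Ntr i) (Fin.natAdd Tpre t) * l (Fin.natAdd Tpre t))
          - ∑ t : Fin Tpre, w (Fin.castAdd Ntr i) * L (Fin.castAdd Ntr i) (Fin.castAdd Tpost t) * l (Fin.castAdd Tpost t))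
          = w (Fin.castAdd Ntr i) * d := by
        intro i
        simp only [mul_assoc]
        rw [← Finset.mul_sum, ← Finset.mul_sum, ← mul_sub, hd]
      rw [Finset.sum_congr rfl (fun i _ => this i), ← Finset.sum_mul, hwco, one_mul]
    linarith
  refine ⟨parta, partb, ?_⟩
  rintro ⟨a, b, hab⟩
  apply parta
  refine ⟨(∑ i : Fin Ntr, w (Fin.natAdd Nco i) * a (Fin.natAdd Nco i))
    - (∑ i : Fin Nco, w (Fin.castAdd Ntr i) * a (Fin.castAdd Ntr i)), fun t => ?_⟩
  simp only [hab, mul_add, Finset.sum_add_distrib, ← Finset.sum_mul, hwtrsum, hwco, one_mul]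
  ring

end SDID
end
end

section
/- In the block panel design, suppose Y = L + W∘τ + E where the rows E_{i·} are independent mean-zero random vectors with common covariance matrix Σ ∈ ℝ^{T×T}. Then the expected unit-weight objective satisfies, for all ω₀ ∈ ℝ and ω ∈ Ω, E ℓ_unit(ω₀,ω) = ‖ω₀·1_{T_pre} + (L_{co,pre}'ω_co − L_{tr,pre}'ω_tr)‖² + (trace(Σ_{pre,pre}) + ζ²T_pre)·‖ω_co‖² + c, where c = N_tr^{−1}·trace(Σ_{pre,pre}) + ζ²T_pre/N_tr does not depend on (ω₀, ω_co). Consequently, the minimizers of E ℓ_unit over ℝ×Ω coincide with the minimizers of ‖ω₀·1_{T_pre} + L_{co,pre}'ω_co − L_{tr,pre}'ω_tr‖² + (trace(Σ_{pre,pre}) + ζ²T_pre)‖ω_co‖². -/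
open Filter MeasureTheory ProbabilityTheory Matrix Real Asymptotics

noncomputable section

namespace SDID

/-- The synthetic-control unit-weight objective `ℓ_unit`. -/
def ellUnit {Nco Ntr Tpre Tpost : ℕ} (ζ : ℝ)
    (Y : Matrix (Fin (Nco + Ntr)) (Fin (Tpre + Tpost)) ℝ)
    (w0 : ℝ) (w : Fin (Nco + Ntr) → ℝ) : ℝ :=
  (∑ t : Fin Tpre,
    (w0 + (∑ i : Fin Nco, w (Fin.castAdd Ntr i) * Y (Fin.castAdd Ntr i) (Fin.castAdd Tpost t))
      - (Ntr : ℝ)⁻¹ * ∑ i : Fin Ntr, Y (Fin.natAdd Nco i) (Fin.castAdd Tpost t)) ^ 2)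
  + ζ ^ 2 * Tpre * ∑ i, w i ^ 2

/-- trace of the pre-pre block of `Σ`. -/
def traceSpp {Tpre Tpost : ℕ} (S : Matrix (Fin (Tpre + Tpost)) (Fin (Tpre + Tpost)) ℝ) : ℝ :=
  ∑ t : Fin Tpre, S (Fin.castAdd Tpost t) (Fin.castAdd Tpost t)

/-- The deterministic surrogate objective for the unit weights
`g(ω₀,ω) = ‖ω₀·1 + L_{co,pre}'ω_co − L_{tr,pre}'ω_tr‖² + (tr Σ_{pre,pre} + ζ²T_pre)‖ω_co‖²`. -/
def ellUnitOracle {Nco Ntr Tpre Tpost : ℕ} (ζ : ℝ)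
    (S : Matrix (Fin (Tpre + Tpost)) (Fin (Tpre + Tpost)) ℝ)
    (L : Matrix (Fin (Nco + Ntr)) (Fin (Tpre + Tpost)) ℝ)
    (w0 : ℝ) (w : Fin (Nco + Ntr) → ℝ) : ℝ :=
  (∑ t : Fin Tpre,
    (w0 + (∑ i : Fin Nco, w (Fin.castAdd Ntr i) * L (Fin.castAdd Ntr i) (Fin.castAdd Tpost t))
      - ∑ i : Fin Ntr, w (Fin.natAdd Nco i) * L (Fin.natAdd Nco i) (Fin.castAdd Tpost t)) ^ 2)
  + (traceSpp S + ζ ^ 2 * Tpre) * ∑ i : Fin Nco, w (Fin.castAdd Ntr i) ^ 2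

section Aux

variable {Ωt : Type*} [MeasurableSpace Ωt] {μ : Measure Ωt} [IsProbabilityMeasure μ]
variable {N T : ℕ} {E : Fin N → Fin T → Ωt → ℝ}

lemma cross_indep
    (hrowindep : iIndepFun
      (fun (i : Fin N) (ω : Ωt) => fun t => E i t ω) μ)
    {i j : Fin N} (hij : i ≠ j) (s t : Fin T) :
    IndepFun (E i s) (E j t) μ := by
  have h := hrowindep.indepFun hij
  exact h.comp (measurable_pi_apply s) (measurable_pi_apply t)

lemma integral_affine_sq
    (hmeas : ∀ i t, Measurable (E i t))
    (hrowindep : iIndepFun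
      (fun (i : Fin N) (ω : Ωt) => fun t => E i t ω) μ)
    (hint : ∀ i t, Integrable (E i t) μ)
    (hmean : ∀ i t, ∫ ω, E i t ω ∂μ = 0)
    (t : Fin T) (v : ℝ)
    (hcovint : ∀ i, Integrable (fun ω => E i t ω * E i t ω) μ)
    (hcov : ∀ i, ∫ ω, E i t ω * E i t ω ∂μ = v)
    (c : Fin N → ℝ) (a : ℝ) :
    Integrable (fun ω => (a + ∑ i, c i * E i t ω) ^ 2) μ ∧
    ∫ ω, (a + ∑ i, c i * E i t ω) ^ 2 ∂μ = a ^ 2 + (∑ i, (c i) ^ 2) * v := by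
  have hquadint : ∀ i j : Fin N, Integrable (fun ω => E i t ω * E j t ω) μ := by
    intro i j
    rcases eq_or_ne i j with rfl | hij
    · exact hcovint i
    · exact (cross_indep hrowindep hij t t).integrable_mul (hint i t) (hint j t)
  have hquad : ∀ i j : Fin N, ∫ ω, E i t ω * E j t ω ∂μ = if i = j then v else 0 := by
    intro i j
    rcases eq_or_ne i j with rfl | hij
    · simp [hcov i]
    · rw [if_neg hij]
      have h := (cross_indep hrowindep hij t t).integral_mul_eq_mul_integral
        (hmeas i t).aestronglyMeasurable (hmeas j t).aestronglyMeasurable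
      simpa [Pi.mul_apply, hmean i t, hmean j t] using h
  have hpt : (fun ω => (a + ∑ i, c i * E i t ω) ^ 2)
      = fun ω => a ^ 2 + (∑ i, (2 * a * c i) * E i t ω)
        + ∑ i, ∑ j, (c i * c j) * (E i t ω * E j t ω) := by
    funext ω
    have h1 : (∑ i, c i * E i t ω) * (∑ j, c j * E j t ω)
        = ∑ i, ∑ j, (c i * c j) * (E i t ω * E j t ω) := by
      rw [Finset.sum_mul_sum]
      exact Finset.sum_congr rfl fun i _ => Finset.sum_congr rfl fun j _ => by ring
    have h2 : (∑ i, (2 * a * c i) * E i t ω) = 2 * a * (∑ i, c i * E i t ω) := by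
      rw [Finset.mul_sum]
      exact Finset.sum_congr rfl fun i _ => by ring
    rw [h2, ← h1]; ring
  have Ilin : Integrable (fun ω => ∑ i, (2 * a * c i) * E i t ω) μ :=
    integrable_finset_sum _ fun i _ => (hint i t).const_mul _
  have Iquad : Integrable (fun ω => ∑ i, ∑ j, (c i * c j) * (E i t ω * E j t ω)) μ :=
    integrable_finset_sum _ fun i _ =>
      integrable_finset_sum _ fun j _ => (hquadint i j).const_mul _
  have Iall : Integrable (fun ω => (a + ∑ i, c i * E i t ω) ^ 2) μ := by
    rw [hpt]
    exact ((integrable_const _).add Ilin).add Iquad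
  refine ⟨Iall, ?_⟩
  have I1 : Integrable (fun ω => a ^ 2 + ∑ i, (2 * a * c i) * E i t ω) μ :=
    (integrable_const _).add Ilin
  rw [hpt, integral_add I1 Iquad,
    integral_add (integrable_const (a ^ 2)) Ilin, integral_const,
    integral_finset_sum _ (fun i _ => (hint i t).const_mul _),
    integral_finset_sum _ (fun i _ =>
      integrable_finset_sum _ fun j _ => (hquadint i j).const_mul _)]
  have hlin : ∀ i : Fin N, ∫ ω, (2 * a * c i) * E i t ω ∂μ = 0 := by
    intro i; rw [integral_const_mul, hmean i t, mul_zero]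
  have hq : ∀ i : Fin N,
      (∑ j, ∫ ω, (c i * c j) * (E i t ω * E j t ω) ∂μ) = c i ^ 2 * v := by
    intro i
    have : ∀ j : Fin N, ∫ ω, (c i * c j) * (E i t ω * E j t ω) ∂μ
        = (c i * c j) * (if i = j then v else 0) := by
      intro j; rw [integral_const_mul, hquad i j]
    rw [Finset.sum_congr rfl fun j _ => this j, Finset.sum_eq_single i]
    · rw [if_pos rfl]; ring
    · intro j _ hji; simp [Ne.symm hji]
    · intro h; exact absurd (Finset.mem_univ i) h
  have hq2 : ∀ i : Fin N, ∫ ω, ∑ j, (c i * c j) * (E i t ω * E j t ω) ∂μ = c i ^ 2 * v := by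
    intro i
    rw [integral_finset_sum _ (fun j _ => (hquadint i j).const_mul _)]
    exact hq i
  simp [hlin, hq2, measure_univ, Finset.sum_mul]

end Aux

lemma Wind_pre {Nco Ntr Tpre Tpost : ℕ} (i : Fin (Nco + Ntr)) (t : Fin Tpre) :
    Wind Nco Ntr Tpre Tpost i (Fin.castAdd Tpost t) = 0 := by
  unfold Wind
  rw [if_neg]
  rintro ⟨-, h⟩
  rw [Fin.coe_castAdd] at h
  exact absurd h (Nat.not_le.2 t.isLt)

/-- if the rows of `E` are independent, mean zero, with common covariance
`Σ`, then for all `ω₀ ∈ ℝ`, `ω ∈ Ω`,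
`E ℓ_unit(ω₀,ω) = ‖ω₀·1 + L_{co,pre}'ω_co − L_{tr,pre}'ω_tr‖²
  + (tr Σ_{pre,pre} + ζ²T_pre)·‖ω_co‖² + c`,
with `c = N_tr⁻¹ tr Σ_{pre,pre} + ζ²T_pre/N_tr` independent of `(ω₀, ω_co)`;
consequently the minimizers of `E ℓ_unit` over `ℝ×Ω` coincide with those of the
deterministic surrogate objective. -/
theorem expected_unit_objective {Nco Ntr Tpre Tpost : ℕ}
    (hNtr : 1 ≤ Ntr) (hTpost : 1 ≤ Tpost)
    {Ωt : Type*} [MeasurableSpace Ωt] (μ : Measure Ωt) [IsProbabilityMeasure μ]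
    (L τm : Matrix (Fin (Nco + Ntr)) (Fin (Tpre + Tpost)) ℝ)
    (E : Fin (Nco + Ntr) → Fin (Tpre + Tpost) → Ωt → ℝ)
    (S : Matrix (Fin (Tpre + Tpost)) (Fin (Tpre + Tpost)) ℝ) (ζ : ℝ)
    (hmeas : ∀ i t, Measurable (E i t))
    (hrowindep : iIndepFun
      (fun (i : Fin (Nco + Ntr)) (ω : Ωt) => fun t => E i t ω) μ)
    (hint : ∀ i t, Integrable (E i t) μ)
    (hmean : ∀ i t, ∫ ω, E i t ω ∂μ = 0)
    (hcovint : ∀ i s t, Integrable (fun ω => E i s ω * E i t ω) μ)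
    (hcov : ∀ i s t, ∫ ω, E i s ω * E i t ω ∂μ = S s t) :
    (∀ (w0 : ℝ) (w : Fin (Nco + Ntr) → ℝ), w ∈ OmegaSet Nco Ntr →
      ∫ ω, ellUnit ζ (Ymat L τm (fun i t => E i t ω)) w0 w ∂μ
        = ellUnitOracle ζ S L w0 w
          + ((Ntr : ℝ)⁻¹ * traceSpp S + ζ ^ 2 * Tpre / Ntr)) ∧
    (∀ p : ℝ × (Fin (Nco + Ntr) → ℝ), p.2 ∈ OmegaSet Nco Ntr →
      (IsMinOn (fun q : ℝ × (Fin (Nco + Ntr) → ℝ) =>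
          ∫ ω, ellUnit ζ (Ymat L τm (fun i t => E i t ω)) q.1 q.2 ∂μ)
        {q : ℝ × (Fin (Nco + Ntr) → ℝ) | q.2 ∈ OmegaSet Nco Ntr} p
       ↔ IsMinOn (fun q : ℝ × (Fin (Nco + Ntr) → ℝ) => ellUnitOracle ζ S L q.1 q.2)
        {q : ℝ × (Fin (Nco + Ntr) → ℝ) | q.2 ∈ OmegaSet Nco Ntr} p)) := by
  have hNtrR : (Ntr : ℝ) ≠ 0 := Nat.cast_ne_zero.2 (by omega)
  have key : ∀ (w0 : ℝ) (w : Fin (Nco + Ntr) → ℝ), w ∈ OmegaSet Nco Ntr →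
      ∫ ω, ellUnit ζ (Ymat L τm (fun i t => E i t ω)) w0 w ∂μ
        = ellUnitOracle ζ S L w0 w
          + ((Ntr : ℝ)⁻¹ * traceSpp S + ζ ^ 2 * Tpre / Ntr) := by
    rintro w0 w ⟨hw0, hw1, hw2⟩
    set c : Fin (Nco + Ntr) → ℝ :=
      Fin.addCases (fun i => w (Fin.castAdd Ntr i)) (fun _ => -(Ntr : ℝ)⁻¹) with hc
    set a : Fin Tpre → ℝ := fun t => w0
      + (∑ i : Fin Nco, w (Fin.castAdd Ntr i) * L (Fin.castAdd Ntr i) (Fin.castAdd Tpost t))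
      - ∑ i : Fin Ntr, (Ntr : ℝ)⁻¹ * L (Fin.natAdd Nco i) (Fin.castAdd Tpost t) with ha
    set W : ℝ := ∑ i : Fin Nco, w (Fin.castAdd Ntr i) ^ 2 with hW
    have hsumc : ∀ (t : Fin Tpre) (ω : Ωt),
        (∑ i, c i * E i (Fin.castAdd Tpost t) ω)
          = (∑ i : Fin Nco, w (Fin.castAdd Ntr i) * E (Fin.castAdd Ntr i) (Fin.castAdd Tpost t) ω)
            - ∑ i : Fin Ntr, (Ntr : ℝ)⁻¹ * E (Fin.natAdd Nco i) (Fin.castAdd Tpost t) ω := by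
      intro t ω
      rw [Fin.sum_univ_add]
      simp only [hc, Fin.addCases_left, Fin.addCases_right, neg_mul]
      rw [Finset.sum_neg_distrib]
      ring
    have hinner : ∀ (t : Fin Tpre) (ω : Ωt),
        w0 + (∑ i : Fin Nco, w (Fin.castAdd Ntr i)
              * Ymat L τm (fun i t => E i t ω) (Fin.castAdd Ntr i) (Fin.castAdd Tpost t))
          - (Ntr : ℝ)⁻¹ * ∑ i : Fin Ntr,
              Ymat L τm (fun i t => E i t ω) (Fin.natAdd Nco i) (Fin.castAdd Tpost t)
          = a t + ∑ i, c i * E i (Fin.castAdd Tpost t) ω := by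
      intro t ω
      simp only [Ymat, Wind_pre, zero_mul, add_zero]
      rw [hsumc t ω, ha, Finset.mul_sum]
      simp only [mul_add, Finset.sum_add_distrib]
      ring
    have hct : ∀ t : Fin Tpre,
        Integrable (fun ω => (a t + ∑ i, c i * E i (Fin.castAdd Tpost t) ω) ^ 2) μ ∧
        ∫ ω, (a t + ∑ i, c i * E i (Fin.castAdd Tpost t) ω) ^ 2 ∂μ
          = a t ^ 2 + (∑ i, (c i) ^ 2) * S (Fin.castAdd Tpost t) (Fin.castAdd Tpost t) :=
      fun t => integral_affine_sq hmeas hrowindep hint hmean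
        (Fin.castAdd Tpost t) _
        (fun i => hcovint i _ _) (fun i => hcov i _ _) c (a t)
    have hsumsq_c : (∑ i, (c i) ^ 2) = W + (Ntr : ℝ)⁻¹ := by
      rw [Fin.sum_univ_add]
      simp only [hc, Fin.addCases_left, Fin.addCases_right, neg_sq, hW]
      rw [Finset.sum_const, Finset.card_univ, Fintype.card_fin]
      field_simp
      ring_nf; rw [inv_pow, mul_inv_cancel₀ (pow_ne_zero 2 hNtrR)]; ring
    have hsumsq_w : (∑ i, w i ^ 2) = W + (Ntr : ℝ)⁻¹ := by
      rw [Fin.sum_univ_add]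
      simp only [hw2, hW]
      rw [Finset.sum_const, Finset.card_univ, Fintype.card_fin]
      field_simp
      ring_nf; rw [inv_pow, mul_inv_cancel₀ (pow_ne_zero 2 hNtrR)]; ring
    have hEll : (fun ω => ellUnit ζ (Ymat L τm (fun i t => E i t ω)) w0 w)
        = fun ω => (∑ t : Fin Tpre, (a t + ∑ i, c i * E i (Fin.castAdd Tpost t) ω) ^ 2)
          + ζ ^ 2 * Tpre * ∑ i, w i ^ 2 := by
      funext ω
      unfold ellUnit
      congr 1
      exact Finset.sum_congr rfl fun t _ => by rw [hinner t ω]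
    have hL : ∫ ω, ellUnit ζ (Ymat L τm (fun i t => E i t ω)) w0 w ∂μ
        = (∑ t : Fin Tpre, a t ^ 2)
          + (W + (Ntr : ℝ)⁻¹)
            * (∑ t : Fin Tpre, S (Fin.castAdd Tpost t) (Fin.castAdd Tpost t))
          + ζ ^ 2 * Tpre * (W + (Ntr : ℝ)⁻¹) := by
      have Isum : Integrable
          (fun ω => ∑ t : Fin Tpre, (a t + ∑ i, c i * E i (Fin.castAdd Tpost t) ω) ^ 2) μ :=
        integrable_finset_sum _ fun t _ => (hct t).1
      rw [hEll, integral_add Isum (integrable_const _),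
        integral_finset_sum _ (fun t _ => (hct t).1), integral_const]
      simp only [measure_univ, ENNReal.toReal_one, probReal_univ, smul_eq_mul, one_mul]
      rw [Finset.sum_congr rfl fun t _ => (hct t).2, Finset.sum_add_distrib,
        ← Finset.mul_sum, hsumsq_c, hsumsq_w]
    have hR : ellUnitOracle ζ S L w0 w
          + ((Ntr : ℝ)⁻¹ * traceSpp S + ζ ^ 2 * Tpre / Ntr)
        = (∑ t : Fin Tpre, a t ^ 2)
          + (W + (Ntr : ℝ)⁻¹)
            * (∑ t : Fin Tpre, S (Fin.castAdd Tpost t) (Fin.castAdd Tpost t))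
          + ζ ^ 2 * Tpre * (W + (Ntr : ℝ)⁻¹) := by
      unfold ellUnitOracle traceSpp
      simp only [hw2, ha, hW]
      field_simp
      ring
    exact hL.trans hR.symm
  refine ⟨key, ?_⟩
  rintro p hp
  rw [isMinOn_iff, isMinOn_iff]
  constructor <;> intro h q hq
  · have h1 := h q hq
    rw [key p.1 p.2 hp, key q.1 q.2 hq] at h1
    linarith
  · have h1 := h q hq
    rw [key p.1 p.2 hp, key q.1 q.2 hq]
    linarith

end SDID
end
end

section
/- In the block panel design, suppose Y = L + W∘τ + E where the rows E_{i·} are independent mean-zero random vectors with common covariance Σ ∈ ℝ^{T×T}. Then for all λ₀ ∈ ℝ and λ ∈ Λ, E ℓ_time(λ₀,λ) = ‖λ₀·1_{N_co} + L_{co,pre}λ_pre − L_{co,post}λ_post‖² + N_co·q(λ_pre), where q(λ_pre) = [λ_pre; −λ_post]'·Σ·[λ_pre; −λ_post]. Moreover, if Σ_{pre,pre} is invertible, then q(λ_pre) = (λ_pre − ψ)'Σ_{pre,pre}(λ_pre − ψ) + c with ψ = Σ_{pre,pre}^{−1}Σ_{pre,post}λ_post and c = λ_post'(Σ_{post,post}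 − Σ_{post,pre}Σ_{pre,pre}^{−1}Σ_{pre,post})λ_post independent of λ_pre; hence the minimizers of E ℓ_time over ℝ×Λ coincide with the minimizers of ‖λ₀·1_{N_co} + L_{co,pre}λ_pre − L_{co,post}λ_post‖² + N_co‖Σ_{pre,pre}^{1/2}(λ_pre − ψ)‖². -/
open Filter MeasureTheory ProbabilityTheory Matrix Real Asymptotics

noncomputable section

namespace SDID

/-- The synthetic-control time-weight objective `ℓ_time`. -/
def ellTime {Nco Ntr Tpre Tpost : ℕ}
    (Y : Matrix (Fin (Nco + Ntr)) (Fin (Tpre + Tpost)) ℝ)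
    (l0 : ℝ) (l : Fin (Tpre + Tpost) → ℝ) : ℝ :=
  ∑ i : Fin Nco,
    (l0 + (∑ t : Fin Tpre, l (Fin.castAdd Tpost t) * Y (Fin.castAdd Ntr i) (Fin.castAdd Tpost t))
      - (Tpost : ℝ)⁻¹ * ∑ t : Fin Tpost, Y (Fin.castAdd Ntr i) (Fin.natAdd Tpre t)) ^ 2

/-- the signed concatenation `[λ_pre; −λ_post]` of a time-weight vector. -/
def vstar {Tpre Tpost : ℕ} (l : Fin (Tpre + Tpost) → ℝ) : Fin (Tpre + Tpost) → ℝ :=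
  fun t => if (t : ℕ) < Tpre then l t else -(l t)

/-- the quadratic form `q(λ_pre) = [λ_pre; −λ_post]'·Σ·[λ_pre; −λ_post]`. -/
def qform {Tpre Tpost : ℕ} (S : Matrix (Fin (Tpre + Tpost)) (Fin (Tpre + Tpost)) ℝ)
    (l : Fin (Tpre + Tpost) → ℝ) : ℝ :=
  vstar l ⬝ᵥ (S *ᵥ vstar l)

/-- blocks of `Σ`. -/
def Spp {Tpre Tpost : ℕ} (S : Matrix (Fin (Tpre + Tpost)) (Fin (Tpre + Tpost)) ℝ) :
    Matrix (Fin Tpre) (Fin Tpre) ℝ := S.submatrix (Fin.castAdd Tpost) (Fin.castAdd Tpost)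

def Spq {Tpre Tpost : ℕ} (S : Matrix (Fin (Tpre + Tpost)) (Fin (Tpre + Tpost)) ℝ) :
    Matrix (Fin Tpre) (Fin Tpost) ℝ := S.submatrix (Fin.castAdd Tpost) (Fin.natAdd Tpre)

def Sqp {Tpre Tpost : ℕ} (S : Matrix (Fin (Tpre + Tpost)) (Fin (Tpre + Tpost)) ℝ) :
    Matrix (Fin Tpost) (Fin Tpre) ℝ := S.submatrix (Fin.natAdd Tpre) (Fin.castAdd Tpost)

def Sqq {Tpre Tpost : ℕ} (S : Matrix (Fin (Tpre + Tpost)) (Fin (Tpre + Tpost)) ℝ) :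
    Matrix (Fin Tpost) (Fin Tpost) ℝ := S.submatrix (Fin.natAdd Tpre) (Fin.natAdd Tpre)

/-- the autoregression vector `ψ = Σ_{pre,pre}⁻¹ Σ_{pre,post} λ_post` with
`λ_post` the constant vector `1/T_post`. -/
def psiVec {Tpre Tpost : ℕ} (S : Matrix (Fin (Tpre + Tpost)) (Fin (Tpre + Tpost)) ℝ) :
    Fin Tpre → ℝ :=
  (Spp S)⁻¹ *ᵥ (Spq S *ᵥ fun _ : Fin Tpost => (Tpost : ℝ)⁻¹)

/-- the deterministic surrogate objective for the time weights,
`‖λ₀·1 + L_{co,pre}λ_pre − L_{co,post}λ_post‖² + N_co·(λ_pre − ψ)'Σ_{pre,pre}(λ_pre − ψ)`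
(note `‖Σ_{pre,pre}^{1/2}(λ_pre − ψ)‖² = (λ_pre − ψ)'Σ_{pre,pre}(λ_pre − ψ)`). -/
def ellTimeOracle {Nco Ntr Tpre Tpost : ℕ}
    (S : Matrix (Fin (Tpre + Tpost)) (Fin (Tpre + Tpost)) ℝ)
    (L : Matrix (Fin (Nco + Ntr)) (Fin (Tpre + Tpost)) ℝ)
    (l0 : ℝ) (l : Fin (Tpre + Tpost) → ℝ) : ℝ :=
  (∑ i : Fin Nco,
    (l0 + (∑ t : Fin Tpre, L (Fin.castAdd Ntr i) (Fin.castAdd Tpost t) * l (Fin.castAdd Tpost t))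
      - ∑ t : Fin Tpost, L (Fin.castAdd Ntr i) (Fin.natAdd Tpre t) * l (Fin.natAdd Tpre t)) ^ 2)
  + (Nco : ℝ) *
      ((fun s => l (Fin.castAdd Tpost s) - psiVec S s) ⬝ᵥ
        (Spp S *ᵥ fun s => l (Fin.castAdd Tpost s) - psiVec S s))


section Aux
open MeasureTheory

lemma integral_sq_lin {Ωt : Type*} [MeasurableSpace Ωt] (μ : Measure Ωt) [IsProbabilityMeasure μ]
    {n : ℕ} (a : ℝ) (c : Fin n → ℝ) (F : Fin n → Ωt → ℝ)
    (hint : ∀ t, Integrable (F t) μ) (hmean : ∀ t, ∫ ω, F t ω ∂μ = 0)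
    (hcovint : ∀ s t, Integrable (fun ω => F s ω * F t ω) μ) :
    Integrable (fun ω => (a + ∑ t, c t * F t ω)^2) μ ∧
    ∫ ω, (a + ∑ t, c t * F t ω)^2 ∂μ
      = a^2 + ∑ s, ∑ t, c s * c t * (∫ ω, F s ω * F t ω ∂μ) := by
  have hexp : (fun ω => (a + ∑ t, c t * F t ω)^2)
      = fun ω => (a^2 + ∑ t, (2*a*c t) * F t ω)
          + ∑ s, ∑ t, (c s * c t) * (F s ω * F t ω) := by
    funext ω
    have h1 : (∑ t, c t * F t ω) * (∑ t, c t * F t ω)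
        = ∑ s, ∑ t, (c s * c t) * (F s ω * F t ω) := by
      rw [Finset.sum_mul_sum]
      exact Finset.sum_congr rfl fun s _ => Finset.sum_congr rfl fun t _ => by ring
    have h2 : 2*a*(∑ t, c t * F t ω) = ∑ t, (2*a*c t) * F t ω := by
      rw [Finset.mul_sum]; exact Finset.sum_congr rfl fun t _ => by ring
    rw [add_sq, sq (∑ t, c t * F t ω), h1, ← h2]
  have hi1 : Integrable (fun ω => (a^2 + ∑ t, (2*a*c t) * F t ω)
      + ∑ s, ∑ t, (c s * c t) * (F s ω * F t ω)) μ :=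
    ((integrable_const _).add (integrable_finset_sum _ fun t _ => ((hint t).const_mul _))).add
      (integrable_finset_sum _ fun s _ => integrable_finset_sum _ fun t _ =>
        ((hcovint s t).const_mul _))
  have hInt : Integrable (fun ω => (a + ∑ t, c t * F t ω)^2) μ := hexp ▸ hi1
  refine ⟨hInt, ?_⟩
  have hA : Integrable (fun ω => a^2 + ∑ t, (2*a*c t) * F t ω) μ :=
    (integrable_const _).add (integrable_finset_sum _ fun t _ => ((hint t).const_mul _))
  have hB : Integrable (fun ω => ∑ s, ∑ t, (c s * c t) * (F s ω * F t ω)) μ :=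
    integrable_finset_sum _ fun s _ => integrable_finset_sum _ fun t _ =>
      ((hcovint s t).const_mul _)
  have hC : Integrable (fun ω => ∑ t, (2*a*c t) * F t ω) μ :=
    integrable_finset_sum _ fun t _ => ((hint t).const_mul _)
  rw [hexp, integral_add hA hB, integral_add (integrable_const _) hC,
    integral_finset_sum _ (fun t _ => ((hint t).const_mul _)),
    integral_finset_sum _ (fun s _ => integrable_finset_sum _ fun t _ =>
      ((hcovint s t).const_mul _))]
  simp only [integral_const, probReal_univ, measure_univ, ENNReal.toReal_one, one_smul, integral_const_mul,
    hmean, mul_zero, Finset.sum_const_zero, add_zero]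
  congr 1
  refine Finset.sum_congr rfl fun s _ => ?_
  rw [integral_finset_sum _ (fun t _ => ((hcovint s t).const_mul _))]
  exact Finset.sum_congr rfl fun t _ => by rw [integral_const_mul]

lemma dot4 {p q : ℕ} (S : Matrix (Fin (p+q)) (Fin (p+q)) ℝ) (x : Fin (p+q) → ℝ) :
    x ⬝ᵥ (S *ᵥ x)
      = ((fun s => x (Fin.castAdd q s)) ⬝ᵥ
          (S.submatrix (Fin.castAdd q) (Fin.castAdd q) *ᵥ fun t => x (Fin.castAdd q t)))
      + ((fun s => x (Fin.castAdd q s)) ⬝ᵥ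
          (S.submatrix (Fin.castAdd q) (Fin.natAdd p) *ᵥ fun t => x (Fin.natAdd p t)))
      + ((fun s => x (Fin.natAdd p s)) ⬝ᵥ
          (S.submatrix (Fin.natAdd p) (Fin.castAdd q) *ᵥ fun t => x (Fin.castAdd q t)))
      + ((fun s => x (Fin.natAdd p s)) ⬝ᵥ
          (S.submatrix (Fin.natAdd p) (Fin.natAdd p) *ᵥ fun t => x (Fin.natAdd p t))) := by
  simp only [dotProduct, Matrix.mulVec, Matrix.submatrix_apply, Fin.sum_univ_add,
    mul_add, Finset.sum_add_distrib]
  ring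

end Aux

/-- with independent mean-zero rows of common covariance `Σ`,
`E ℓ_time(λ₀,λ) = ‖λ₀·1 + L_{co,pre}λ_pre − L_{co,post}λ_post‖² + N_co·q(λ_pre)` with
`q(λ_pre) = [λ_pre;−λ_post]'Σ[λ_pre;−λ_post]`; moreover if `Σ_{pre,pre}` is invertible
then `q(λ_pre) = (λ_pre−ψ)'Σ_{pre,pre}(λ_pre−ψ) + c` with
`ψ = Σ_{pre,pre}⁻¹Σ_{pre,post}λ_post` and
`c = λ_post'(Σ_{post,post} − Σ_{post,pre}Σ_{pre,pre}⁻¹Σ_{pre,post})λ_post`, and hence the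
minimizers of `E ℓ_time` over `ℝ×Λ` coincide with those of the surrogate objective. -/
theorem expected_time_objective {Nco Ntr Tpre Tpost : ℕ}
    (hNtr : 1 ≤ Ntr) (hTpost : 1 ≤ Tpost)
    {Ωt : Type*} [MeasurableSpace Ωt] (μ : Measure Ωt) [IsProbabilityMeasure μ]
    (L τm : Matrix (Fin (Nco + Ntr)) (Fin (Tpre + Tpost)) ℝ)
    (E : Fin (Nco + Ntr) → Fin (Tpre + Tpost) → Ωt → ℝ)
    (S : Matrix (Fin (Tpre + Tpost)) (Fin (Tpre + Tpost)) ℝ)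
    (hmeas : ∀ i t, Measurable (E i t))
    (hrowindep : iIndepFun
      (fun (i : Fin (Nco + Ntr)) (ω : Ωt) => fun t => E i t ω) μ)
    (hint : ∀ i t, Integrable (E i t) μ)
    (hmean : ∀ i t, ∫ ω, E i t ω ∂μ = 0)
    (hcovint : ∀ i s t, Integrable (fun ω => E i s ω * E i t ω) μ)
    (hcov : ∀ i s t, ∫ ω, E i s ω * E i t ω ∂μ = S s t) :
    (∀ (l0 : ℝ) (l : Fin (Tpre + Tpost) → ℝ), l ∈ LambdaSet Tpre Tpost →
      ∫ ω, ellTime (Ymat L τm (fun i t => E i t ω)) l0 l ∂μ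
        = (∑ i : Fin Nco,
            (l0 + (∑ t : Fin Tpre,
                L (Fin.castAdd Ntr i) (Fin.castAdd Tpost t) * l (Fin.castAdd Tpost t))
              - ∑ t : Fin Tpost,
                L (Fin.castAdd Ntr i) (Fin.natAdd Tpre t) * l (Fin.natAdd Tpre t)) ^ 2)
          + (Nco : ℝ) * qform S l) ∧
    (IsUnit (Spp S).det →
      ((∀ l : Fin (Tpre + Tpost) → ℝ, l ∈ LambdaSet Tpre Tpost →
        qform S l
          = ((fun s => l (Fin.castAdd Tpost s) - psiVec S s) ⬝ᵥ
              (Spp S *ᵥ fun s => l (Fin.castAdd Tpost s) - psiVec S s))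
            + ((fun _ : Fin Tpost => (Tpost : ℝ)⁻¹) ⬝ᵥ
                ((Sqq S - Sqp S * (Spp S)⁻¹ * Spq S) *ᵥ fun _ : Fin Tpost => (Tpost : ℝ)⁻¹))) ∧
       (∀ p : ℝ × (Fin (Tpre + Tpost) → ℝ), p.2 ∈ LambdaSet Tpre Tpost →
        (IsMinOn (fun q : ℝ × (Fin (Tpre + Tpost) → ℝ) =>
            ∫ ω, ellTime (Ymat L τm (fun i t => E i t ω)) q.1 q.2 ∂μ)
          {q : ℝ × (Fin (Tpre + Tpost) → ℝ) | q.2 ∈ LambdaSet Tpre Tpost} p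
         ↔ IsMinOn (fun q : ℝ × (Fin (Tpre + Tpost) → ℝ) => ellTimeOracle S L q.1 q.2)
          {q : ℝ × (Fin (Tpre + Tpost) → ℝ) | q.2 ∈ LambdaSet Tpre Tpost} p)))) := by
  classical
  have hvpre : ∀ (l : Fin (Tpre+Tpost) → ℝ) (t : Fin Tpre),
      vstar l (Fin.castAdd Tpost t) = l (Fin.castAdd Tpost t) := by
    intro l t
    have h : ((Fin.castAdd Tpost t : Fin (Tpre+Tpost)) : ℕ) < Tpre := by
      simpa using t.isLt
    simp [vstar, h]
  have hvpost : ∀ (l : Fin (Tpre+Tpost) → ℝ), l ∈ LambdaSet Tpre Tpost →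
      ∀ t : Fin Tpost, vstar l (Fin.natAdd Tpre t) = -(Tpost:ℝ)⁻¹ := by
    intro l hl t
    have h : ¬ ((Fin.natAdd Tpre t : Fin (Tpre+Tpost)) : ℕ) < Tpre := by
      simp [Fin.coe_natAdd]
    simp [vstar, h, hl.2.2 t]
  have hqsum : ∀ l : Fin (Tpre+Tpost) → ℝ,
      qform S l = ∑ s, ∑ t, vstar l s * vstar l t * S s t := by
    intro l
    simp only [qform, dotProduct, Matrix.mulVec, Finset.mul_sum]
    exact Finset.sum_congr rfl fun s _ => Finset.sum_congr rfl fun t _ => by ring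
  have part1 : ∀ (l0 : ℝ) (l : Fin (Tpre + Tpost) → ℝ), l ∈ LambdaSet Tpre Tpost →
      ∫ ω, ellTime (Ymat L τm (fun i t => E i t ω)) l0 l ∂μ
        = (∑ i : Fin Nco,
            (l0 + (∑ t : Fin Tpre,
                L (Fin.castAdd Ntr i) (Fin.castAdd Tpost t) * l (Fin.castAdd Tpost t))
              - ∑ t : Fin Tpost,
                L (Fin.castAdd Ntr i) (Fin.natAdd Tpre t) * l (Fin.natAdd Tpre t)) ^ 2)
          + (Nco : ℝ) * qform S l := by
    intro l0 l hl
    set A : Fin Nco → ℝ := fun i =>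
      l0 + (∑ t : Fin Tpre,
          L (Fin.castAdd Ntr i) (Fin.castAdd Tpost t) * l (Fin.castAdd Tpost t))
        - ∑ t : Fin Tpost,
          L (Fin.castAdd Ntr i) (Fin.natAdd Tpre t) * l (Fin.natAdd Tpre t) with hA
    have hkeyfun : ∀ ω, ellTime (Ymat L τm fun i t => E i t ω) l0 l
        = ∑ i : Fin Nco,
            (A i + ∑ t, vstar l t * E (Fin.castAdd Ntr i) t ω) ^ 2 := by
      intro ω
      unfold ellTime
      refine Finset.sum_congr rfl fun i _ => ?_
      congr 1
      have hY : ∀ t, Ymat L τm (fun i t => E i t ω) (Fin.castAdd Ntr i) t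
          = L (Fin.castAdd Ntr i) t + E (Fin.castAdd Ntr i) t ω := by
        intro t
        have hcond : ¬ (Nco ≤ ((Fin.castAdd Ntr i : Fin (Nco+Ntr)) : ℕ) ∧ Tpre ≤ (t : ℕ)) := by
          rintro ⟨h1, -⟩
          have := i.isLt
          simp only [Fin.coe_castAdd] at h1
          omega
        simp [Ymat, Wind, hcond]
      simp only [hY]
      rw [Fin.sum_univ_add (f := fun t => vstar l t * E (Fin.castAdd Ntr i) t ω)]
      simp only [hvpre l, hvpost l hl]
      have eL : ∑ t : Fin Tpre, l (Fin.castAdd Tpost t) *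
            (L (Fin.castAdd Ntr i) (Fin.castAdd Tpost t)
              + E (Fin.castAdd Ntr i) (Fin.castAdd Tpost t) ω)
          = (∑ t : Fin Tpre,
              L (Fin.castAdd Ntr i) (Fin.castAdd Tpost t) * l (Fin.castAdd Tpost t))
            + ∑ t : Fin Tpre,
              l (Fin.castAdd Tpost t) * E (Fin.castAdd Ntr i) (Fin.castAdd Tpost t) ω := by
        rw [← Finset.sum_add_distrib]
        exact Finset.sum_congr rfl fun t _ => by ring
      have eR : (Tpost:ℝ)⁻¹ * ∑ t : Fin Tpost,
            (L (Fin.castAdd Ntr i) (Fin.natAdd Tpre t)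
              + E (Fin.castAdd Ntr i) (Fin.natAdd Tpre t) ω)
          = (∑ t : Fin Tpost,
              L (Fin.castAdd Ntr i) (Fin.natAdd Tpre t) * l (Fin.natAdd Tpre t))
            + ∑ t : Fin Tpost,
              (Tpost:ℝ)⁻¹ * E (Fin.castAdd Ntr i) (Fin.natAdd Tpre t) ω := by
        rw [Finset.mul_sum, ← Finset.sum_add_distrib]
        refine Finset.sum_congr rfl fun t _ => ?_
        rw [hl.2.2 t]; ring
      have eneg : ∑ t : Fin Tpost,
            -(Tpost:ℝ)⁻¹ * E (Fin.castAdd Ntr i) (Fin.natAdd Tpre t) ω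
          = -∑ t : Fin Tpost, (Tpost:ℝ)⁻¹ * E (Fin.castAdd Ntr i) (Fin.natAdd Tpre t) ω := by
        rw [← Finset.sum_neg_distrib]
        exact Finset.sum_congr rfl fun t _ => by ring
      rw [eL, eR, eneg, hA]
      ring
    have hInt : ∀ i : Fin Nco, Integrable (fun ω =>
        (A i + ∑ t, vstar l t * E (Fin.castAdd Ntr i) t ω) ^ 2) μ := fun i =>
      (integral_sq_lin μ (A i) (vstar l) (fun t => E (Fin.castAdd Ntr i) t)
        (fun t => hint _ t) (fun t => hmean _ t) (fun s t => hcovint _ s t)).1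
    have hone : ∀ i : Fin Nco,
        ∫ ω, (A i + ∑ t, vstar l t * E (Fin.castAdd Ntr i) t ω) ^ 2 ∂μ
          = A i ^ 2 + qform S l := by
      intro i
      rw [(integral_sq_lin μ (A i) (vstar l) (fun t => E (Fin.castAdd Ntr i) t)
        (fun t => hint _ t) (fun t => hmean _ t) (fun s t => hcovint _ s t)).2]
      congr 1
      rw [hqsum l]
      exact (Finset.sum_congr rfl fun s _ => Finset.sum_congr rfl fun t _ => by
        rw [hcov]).symm
    simp only [hkeyfun]
    rw [integral_finset_sum _ (fun i _ => hInt i)]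
    simp only [hone]
    rw [Finset.sum_add_distrib, Finset.sum_const, Finset.card_univ, Fintype.card_fin,
      nsmul_eq_mul]
  refine ⟨part1, ?_⟩
  intro hdet
  have hi0 : 0 < Nco + Ntr := by omega
  have hSsym : ∀ s t, S s t = S t s := by
    intro s t
    rw [← hcov ⟨0, hi0⟩ s t, ← hcov ⟨0, hi0⟩ t s]
    exact integral_congr_ae (ae_of_all _ fun ω => mul_comm _ _)
  have hAsym : (Spp S)ᵀ = Spp S := by
    ext s t
    simp only [Matrix.transpose_apply, Spp, Matrix.submatrix_apply]
    exact hSsym _ _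
  have hBC : (Spq S)ᵀ = Sqp S := by
    ext t s
    simp only [Matrix.transpose_apply, Spq, Sqp, Matrix.submatrix_apply]
    exact hSsym _ _
  have hψ : Spp S *ᵥ psiVec S = Spq S *ᵥ (fun _ : Fin Tpost => (Tpost:ℝ)⁻¹) := by
    unfold psiVec
    rw [Matrix.mulVec_mulVec, Matrix.mul_nonsing_inv _ hdet, Matrix.one_mulVec]
  have part2a : ∀ l : Fin (Tpre + Tpost) → ℝ, l ∈ LambdaSet Tpre Tpost →
      qform S l
        = ((fun s => l (Fin.castAdd Tpost s) - psiVec S s) ⬝ᵥ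
            (Spp S *ᵥ fun s => l (Fin.castAdd Tpost s) - psiVec S s))
          + ((fun _ : Fin Tpost => (Tpost : ℝ)⁻¹) ⬝ᵥ
              ((Sqq S - Sqp S * (Spp S)⁻¹ * Spq S) *ᵥ fun _ : Fin Tpost => (Tpost : ℝ)⁻¹)) := by
    intro l hl
    set u : Fin Tpre → ℝ := fun s => l (Fin.castAdd Tpost s) with hu
    set v : Fin Tpost → ℝ := fun _ => (Tpost:ℝ)⁻¹ with hvv
    set ψ : Fin Tpre → ℝ := psiVec S with hps
    have hxfold : (fun s => vstar l (Fin.castAdd Tpost s)) = u := funext fun s => hvpre l s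
    have hxfold2 : (fun s => vstar l (Fin.natAdd Tpre s)) = -v :=
      funext fun s => hvpost l hl s
    have hsplit := dot4 S (vstar l)
    rw [hxfold, hxfold2] at hsplit
    rw [show S.submatrix (Fin.castAdd Tpost) (Fin.castAdd Tpost) = Spp S from rfl,
      show S.submatrix (Fin.castAdd Tpost) (Fin.natAdd Tpre) = Spq S from rfl,
      show S.submatrix (Fin.natAdd Tpre) (Fin.castAdd Tpost) = Sqp S from rfl,
      show S.submatrix (Fin.natAdd Tpre) (Fin.natAdd Tpre) = Sqq S from rfl] at hsplit
    simp only [Matrix.mulVec_neg, dotProduct_neg, neg_dotProduct, neg_neg]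
      at hsplit
    have f1 : u ⬝ᵥ (Spp S *ᵥ ψ) = u ⬝ᵥ (Spq S *ᵥ v) := by rw [hps, hψ]
    have f2 : ψ ⬝ᵥ (Spp S *ᵥ u) = u ⬝ᵥ (Spq S *ᵥ v) := by
      rw [Matrix.dotProduct_mulVec, ← hAsym, Matrix.vecMul_transpose, hps, hψ,
        dotProduct_comm]
    have f3 : ψ ⬝ᵥ (Spp S *ᵥ ψ) = ψ ⬝ᵥ (Spq S *ᵥ v) := by
      nth_rewrite 1 [hps]
      rw [hψ]
    have f6 : v ⬝ᵥ (Sqp S *ᵥ u) = u ⬝ᵥ (Spq S *ᵥ v) := by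
      rw [Matrix.dotProduct_mulVec, ← hBC, Matrix.vecMul_transpose, dotProduct_comm]
    have f5 : v ⬝ᵥ (Sqp S *ᵥ ψ) = ψ ⬝ᵥ (Spq S *ᵥ v) := by
      rw [Matrix.dotProduct_mulVec, ← hBC, Matrix.vecMul_transpose, dotProduct_comm]
    have hfun : (fun s => l (Fin.castAdd Tpost s) - psiVec S s) = u - ψ := rfl
    have hCAB : (Sqp S * (Spp S)⁻¹ * Spq S) *ᵥ v = Sqp S *ᵥ ψ := by
      rw [← Matrix.mulVec_mulVec, ← Matrix.mulVec_mulVec, hps]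
      rfl
    have hrhs : ((fun s => l (Fin.castAdd Tpost s) - psiVec S s) ⬝ᵥ
            (Spp S *ᵥ fun s => l (Fin.castAdd Tpost s) - psiVec S s))
          + (v ⬝ᵥ ((Sqq S - Sqp S * (Spp S)⁻¹ * Spq S) *ᵥ v))
        = (u ⬝ᵥ (Spp S *ᵥ u) - u ⬝ᵥ (Spp S *ᵥ ψ) - (ψ ⬝ᵥ (Spp S *ᵥ u) - ψ ⬝ᵥ (Spp S *ᵥ ψ)))
          + (v ⬝ᵥ (Sqq S *ᵥ v) - v ⬝ᵥ (Sqp S *ᵥ ψ)) := by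
      rw [hfun, Matrix.sub_mulVec, Matrix.mulVec_sub, sub_dotProduct,
        dotProduct_sub, dotProduct_sub, dotProduct_sub, hCAB]
    show vstar l ⬝ᵥ (S *ᵥ vstar l) = _
    rw [hsplit, hrhs, f1, f2, f3, f5, f6]
    ring
  refine ⟨part2a, ?_⟩
  intro p hp
  set c0 : ℝ := (fun _ : Fin Tpost => (Tpost : ℝ)⁻¹) ⬝ᵥ
      ((Sqq S - Sqp S * (Spp S)⁻¹ * Spq S) *ᵥ fun _ : Fin Tpost => (Tpost : ℝ)⁻¹) with hc0
  have hkey : ∀ q : ℝ × (Fin (Tpre + Tpost) → ℝ), q.2 ∈ LambdaSet Tpre Tpost →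
      ∫ ω, ellTime (Ymat L τm (fun i t => E i t ω)) q.1 q.2 ∂μ
        = ellTimeOracle S L q.1 q.2 + (Nco : ℝ) * c0 := by
    intro q hq
    rw [part1 q.1 q.2 hq]
    rw [part2a q.2 hq]
    unfold ellTimeOracle
    rw [hc0]
    ring
  rw [isMinOn_iff, isMinOn_iff]
  constructor
  · intro h x hx
    have h1 := h x hx
    rw [hkey x hx, hkey p hp] at h1
    linarith
  · intro h x hx
    have h1 := h x hx
    rw [hkey x hx, hkey p hp]
    linarith


end SDID
end
end

section
/- In the block panel design, the weighted two-way fixed-effects regression recovers the weighted double-differencing estimator: let ω ∈ Ω and λ ∈ Λ have strictly positive coordinates, and let (τ̂, μ̂, α̂, β̂) be any minimizer of Σ_{i,t} ω_i λ_t (Y_{it} − μ − α_i − β_t − W_{it}τ)² over ℝ × ℝ × ℝ^N × ℝ^T with W_{it} = 1{i > N_co, t > T_pre}. Then the τ-component is unique and equals τ̂ = ω_tr'Y_{tr,post}λ_post − ω_co'Y_{co,post}λ_post − ω_tr'Y_{tr,pre}λ_pre + ω_co'Y_{co,pre}λ_pre. -/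
open Filter MeasureTheory ProbabilityTheory Matrix Real Asymptotics

noncomputable section

namespace SDID

/-- Weighted two-way fixed effects objective with unit weights `w` and time weights `l`. -/
def wDidObj {Nco Ntr Tpre Tpost : ℕ} (w : Fin (Nco + Ntr) → ℝ) (l : Fin (Tpre + Tpost) → ℝ)
    (Y : Matrix (Fin (Nco + Ntr)) (Fin (Tpre + Tpost)) ℝ)
    (p : ℝ × ℝ × (Fin (Nco + Ntr) → ℝ) × (Fin (Tpre + Tpost) → ℝ)) : ℝ :=
  ∑ i, ∑ t, w i * l t *
    (Y i t - p.2.1 - p.2.2.1 i - p.2.2.2 t - Wind Nco Ntr Tpre Tpost i t * p.1) ^ 2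

private lemma quad_foc {Q L : ℝ} (hQ : 0 < Q) (h : ∀ ε : ℝ, 0 ≤ Q * ε ^ 2 - 2 * L * ε) :
    L = 0 := by
  have h1 := h (L / Q)
  have hQ' : Q ≠ 0 := ne_of_gt hQ
  have he : Q * (L / Q) ^ 2 - 2 * L * (L / Q) = -(L ^ 2 / Q) := by field_simp; ring
  rw [he] at h1
  have h3 : L ^ 2 ≤ 0 := by
    by_contra hc
    push_neg at hc
    exact absurd (div_pos hc hQ) (by linarith)
  nlinarith [sq_nonneg L]

private lemma sum_expand {n m : ℕ} (w : Fin n → ℝ) (l : Fin m → ℝ) (r g : Fin n → Fin m → ℝ)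
    (ε : ℝ) :
    ∑ i, ∑ t, w i * l t * (r i t - ε * g i t) ^ 2
      = (∑ i, ∑ t, w i * l t * (r i t) ^ 2)
        + ((∑ i, ∑ t, w i * l t * (g i t) ^ 2) * ε ^ 2
            - 2 * (∑ i, ∑ t, w i * l t * g i t * r i t) * ε) := by
  have h : ∀ i t, w i * l t * (r i t - ε * g i t) ^ 2
      = w i * l t * (r i t) ^ 2
        + (w i * l t * (g i t) ^ 2 * ε ^ 2 - 2 * (w i * l t * g i t * r i t) * ε) := by
    intros; ring
  simp_rw [h, Finset.sum_add_distrib, Finset.sum_sub_distrib, ← Finset.sum_mul,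
    ← Finset.mul_sum]

private lemma dsum_pos {n m : ℕ} (w : Fin n → ℝ) (l : Fin m → ℝ) (g : Fin n → Fin m → ℝ)
    (hw : ∀ i, 0 < w i) (hl : ∀ t, 0 < l t)
    (i0 : Fin n) (t0 : Fin m) (h0 : 0 < g i0 t0) :
    0 < ∑ i, ∑ t, w i * l t * (g i t) ^ 2 := by
  apply Finset.sum_pos'
  · intro i _
    exact Finset.sum_nonneg fun t _ => mul_nonneg (mul_nonneg (hw i).le (hl t).le) (sq_nonneg _)
  · refine ⟨i0, Finset.mem_univ _, Finset.sum_pos' ?_ ⟨t0, Finset.mem_univ _, ?_⟩⟩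
    · intro t _
      exact mul_nonneg (mul_nonneg (hw i0).le (hl t).le) (sq_nonneg _)
    · exact mul_pos (mul_pos (hw i0) (hl t0)) (pow_pos h0 2)

private lemma block_sum {n m : ℕ} (w : Fin n → ℝ) (l : Fin m → ℝ) (Y : Fin n → Fin m → ℝ)
    (μ c : ℝ) (α : Fin n → ℝ) (β : Fin m → ℝ) :
    ∑ i, ∑ t, w i * l t * (Y i t - μ - α i - β t - c)
      = (∑ i, ∑ t, w i * l t * Y i t)
        - (μ + c) * ((∑ i, w i) * (∑ t, l t))
        - (∑ i, w i * α i) * (∑ t, l t)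
        - (∑ i, w i) * (∑ t, l t * β t) := by
  have h : ∀ i t, w i * l t * (Y i t - μ - α i - β t - c)
      = w i * l t * Y i t - (μ + c) * (w i * l t) - (w i * α i) * l t - w i * (l t * β t) := by
    intros; ring
  simp_rw [h, Finset.sum_sub_distrib, ← Finset.mul_sum, ← Finset.sum_mul]

/-- for unit weights `ω ∈ Ω` and time weights `λ ∈ Λ` with strictly
positive coordinates, the `τ`-component of any minimizer of the weighted two-way
fixed-effects objective equals the weighted double-differencing estimator
`ω_tr'Y_{tr,post}λ_post − ω_co'Y_{co,post}λ_post − ω_tr'Y_{tr,pre}λ_pre + ω_co'Y_{co,pre}λ_pre`. -/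
theorem weighted_regression_equals_tauWDD {Nco Ntr Tpre Tpost : ℕ}
    (hNtr : 1 ≤ Ntr) (hTpost : 1 ≤ Tpost)
    (w : Fin (Nco + Ntr) → ℝ) (l : Fin (Tpre + Tpost) → ℝ)
    (hw : w ∈ OmegaSet Nco Ntr) (hl : l ∈ LambdaSet Tpre Tpost)
    (hwpos : ∀ i, 0 < w i) (hlpos : ∀ t, 0 < l t)
    (Y : Matrix (Fin (Nco + Ntr)) (Fin (Tpre + Tpost)) ℝ)
    (p : ℝ × ℝ × (Fin (Nco + Ntr) → ℝ) × (Fin (Tpre + Tpost) → ℝ))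
    (hmin : IsMinOn (wDidObj w l Y) Set.univ p) :
    p.1 = tauWDD w l Y := by
  obtain ⟨hwnn, hwco, hwtr⟩ := hw
  obtain ⟨hlnn, hlpre, hlpost⟩ := hl
  obtain ⟨τ, μ, α, β⟩ := p
  show τ = tauWDD w l Y
  have hNtr0 : (Ntr : ℝ) ≠ 0 := Nat.cast_ne_zero.mpr (by omega)
  have hTpost0 : (Tpost : ℝ) ≠ 0 := Nat.cast_ne_zero.mpr (by omega)
  set r : Fin (Nco + Ntr) → Fin (Tpre + Tpost) → ℝ :=
    fun i t => Y i t - μ - α i - β t - Wind Nco Ntr Tpre Tpost i t * τ with hr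
  -- generic first-order condition
  have foc : ∀ (g : Matrix (Fin (Nco + Ntr)) (Fin (Tpre + Tpost)) ℝ)
      (pe : ℝ → ℝ × ℝ × (Fin (Nco + Ntr) → ℝ) × (Fin (Tpre + Tpost) → ℝ)),
      (∀ ε, wDidObj w l Y (pe ε) = ∑ i, ∑ t, w i * l t * (r i t - ε * g i t) ^ 2) →
      (0 < ∑ i, ∑ t, w i * l t * (g i t) ^ 2) →
      (∑ i, ∑ t, w i * l t * g i t * r i t) = 0 := by
    intro g pe hpe hQ
    apply quad_foc hQ
    intro ε
    have hm := isMinOn_iff.mp hmin (pe ε) (Set.mem_univ _)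
    rw [hpe ε] at hm
    have hobj : wDidObj w l Y (τ, μ, α, β) = ∑ i, ∑ t, w i * l t * (r i t) ^ 2 := rfl
    rw [hobj] at hm
    linarith [sum_expand w l r g ε]
  -- FOC for τ
  have e1 : (∑ i, ∑ t, w i * l t * Wind Nco Ntr Tpre Tpost i t * r i t) = 0 := by
    apply foc (Wind Nco Ntr Tpre Tpost) (fun ε => (τ + ε, μ, α, β))
    · intro ε
      refine Finset.sum_congr rfl fun i _ => Finset.sum_congr rfl fun t _ => ?_
      show w i * l t * (Y i t - μ - α i - β t - Wind Nco Ntr Tpre Tpost i t * (τ + ε)) ^ 2 = _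
      simp only [hr]; ring
    · refine dsum_pos w l _ hwpos hlpos ⟨Nco, by omega⟩ ⟨Tpre, by omega⟩ ?_
      simp [Wind]
  -- FOC for treated α's
  have e2 : (∑ i, ∑ t, w i * l t * (if Nco ≤ (i : ℕ) then (1:ℝ) else 0) * r i t) = 0 := by
    apply foc (fun i _ => if Nco ≤ (i : ℕ) then (1:ℝ) else 0)
      (fun ε => (τ, μ, fun j => α j + ε * (if Nco ≤ (j : ℕ) then (1:ℝ) else 0), β))
    · intro ε
      refine Finset.sum_congr rfl fun i _ => Finset.sum_congr rfl fun t _ => ?_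
      show w i * l t * (Y i t - μ - (α i + ε * (if Nco ≤ (i : ℕ) then (1:ℝ) else 0)) - β t
          - Wind Nco Ntr Tpre Tpost i t * τ) ^ 2 = _
      simp only [hr]; ring
    · refine dsum_pos w l _ hwpos hlpos ⟨Nco, by omega⟩ ⟨Tpre, by omega⟩ ?_
      simp
  -- FOC for post-treatment β's
  have e3 : (∑ i, ∑ t, w i * l t * (if Tpre ≤ (t : ℕ) then (1:ℝ) else 0) * r i t) = 0 := by
    apply foc (fun _ t => if Tpre ≤ (t : ℕ) then (1:ℝ) else 0)
      (fun ε => (τ, μ, α, fun s => β s + ε * (if Tpre ≤ (s : ℕ) then (1:ℝ) else 0)))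
    · intro ε
      refine Finset.sum_congr rfl fun i _ => Finset.sum_congr rfl fun t _ => ?_
      show w i * l t * (Y i t - μ - α i - (β t + ε * (if Tpre ≤ (t : ℕ) then (1:ℝ) else 0))
          - Wind Nco Ntr Tpre Tpost i t * τ) ^ 2 = _
      simp only [hr]; ring
    · refine dsum_pos w l _ hwpos hlpos ⟨Nco, by omega⟩ ⟨Tpre, by omega⟩ ?_
      simp
  -- FOC for μ
  have e4 : (∑ i, ∑ t, w i * l t * 1 * r i t) = 0 := by
    apply foc (fun _ _ => (1:ℝ)) (fun ε => (τ, μ + ε, α, β))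
    · intro ε
      refine Finset.sum_congr rfl fun i _ => Finset.sum_congr rfl fun t _ => ?_
      show w i * l t * (Y i t - (μ + ε) - α i - β t - Wind Nco Ntr Tpre Tpost i t * τ) ^ 2 = _
      simp only [hr]; ring
    · exact dsum_pos w l _ hwpos hlpos ⟨Nco, by omega⟩ ⟨Tpre, by omega⟩ one_pos
  -- key combination
  have key : ∑ i, ∑ t, (w i * (if Nco ≤ (i : ℕ) then (1:ℝ) else -1))
      * (l t * (if Tpre ≤ (t : ℕ) then (1:ℝ) else -1)) * r i t = 0 := by
    have hpt : ∀ (i : Fin (Nco + Ntr)) (t : Fin (Tpre + Tpost)),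
        (w i * (if Nco ≤ (i : ℕ) then (1:ℝ) else -1))
          * (l t * (if Tpre ≤ (t : ℕ) then (1:ℝ) else -1)) * r i t
        = 4 * (w i * l t * Wind Nco Ntr Tpre Tpost i t * r i t)
          - 2 * (w i * l t * (if Nco ≤ (i : ℕ) then (1:ℝ) else 0) * r i t)
          - 2 * (w i * l t * (if Tpre ≤ (t : ℕ) then (1:ℝ) else 0) * r i t)
          + w i * l t * 1 * r i t := by
      intro i t
      by_cases hA : Nco ≤ (i : ℕ) <;> by_cases hB : Tpre ≤ (t : ℕ) <;>
        simp [Wind, hA, hB] <;> ring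
    simp_rw [hpt, Finset.sum_add_distrib, Finset.sum_sub_distrib, ← Finset.mul_sum]
    rw [e1, e2, e3, e4]; ring
  -- weight sums over blocks
  have hwt : (∑ i : Fin Ntr, w (Fin.natAdd Nco i)) = 1 := by
    simp only [hwtr]
    rw [Finset.sum_const, Finset.card_univ, Fintype.card_fin, nsmul_eq_mul]
    field_simp
  have hlq : (∑ t : Fin Tpost, l (Fin.natAdd Tpre t)) = 1 := by
    simp only [hlpost]
    rw [Finset.sum_const, Finset.card_univ, Fintype.card_fin, nsmul_eq_mul]
    field_simp
  -- block evaluations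
  have Bcc : (∑ i : Fin Nco, ∑ t : Fin Tpre,
      (w (Fin.castAdd Ntr i) * (if Nco ≤ ((Fin.castAdd Ntr i : Fin (Nco + Ntr)) : ℕ) then (1:ℝ) else -1))
        * (l (Fin.castAdd Tpost t) * (if Tpre ≤ ((Fin.castAdd Tpost t : Fin (Tpre + Tpost)) : ℕ) then (1:ℝ) else -1))
        * r (Fin.castAdd Ntr i) (Fin.castAdd Tpost t))
      = (∑ i : Fin Nco, ∑ t : Fin Tpre,
          w (Fin.castAdd Ntr i) * l (Fin.castAdd Tpost t) * Y (Fin.castAdd Ntr i) (Fin.castAdd Tpost t))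
        - (μ + 0) * ((∑ i : Fin Nco, w (Fin.castAdd Ntr i)) * (∑ t : Fin Tpre, l (Fin.castAdd Tpost t)))
        - (∑ i : Fin Nco, w (Fin.castAdd Ntr i) * α (Fin.castAdd Ntr i)) * (∑ t : Fin Tpre, l (Fin.castAdd Tpost t))
        - (∑ i : Fin Nco, w (Fin.castAdd Ntr i)) * (∑ t : Fin Tpre, l (Fin.castAdd Tpost t) * β (Fin.castAdd Tpost t)) := by
    rw [← block_sum (fun i => w (Fin.castAdd Ntr i)) (fun t => l (Fin.castAdd Tpost t))
      (fun i t => Y (Fin.castAdd Ntr i) (Fin.castAdd Tpost t)) μ 0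
      (fun i => α (Fin.castAdd Ntr i)) (fun t => β (Fin.castAdd Tpost t))]
    refine Finset.sum_congr rfl fun i _ => Finset.sum_congr rfl fun t _ => ?_
    have h1 : ¬ (Nco ≤ ((Fin.castAdd Ntr i : Fin (Nco + Ntr)) : ℕ)) := by simp
    have h2 : ¬ (Tpre ≤ ((Fin.castAdd Tpost t : Fin (Tpre + Tpost)) : ℕ)) := by simp
    simp only [hr, Wind, h1, h2, if_false, false_and, and_false]
    ring
  have Bct : (∑ i : Fin Nco, ∑ t : Fin Tpost,
      (w (Fin.castAdd Ntr i) * (if Nco ≤ ((Fin.castAdd Ntr i : Fin (Nco + Ntr)) : ℕ) then (1:ℝ) else -1))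
        * (l (Fin.natAdd Tpre t) * (if Tpre ≤ ((Fin.natAdd Tpre t : Fin (Tpre + Tpost)) : ℕ) then (1:ℝ) else -1))
        * r (Fin.castAdd Ntr i) (Fin.natAdd Tpre t))
      = -((∑ i : Fin Nco, ∑ t : Fin Tpost,
          w (Fin.castAdd Ntr i) * l (Fin.natAdd Tpre t) * Y (Fin.castAdd Ntr i) (Fin.natAdd Tpre t))
        - (μ + 0) * ((∑ i : Fin Nco, w (Fin.castAdd Ntr i)) * (∑ t : Fin Tpost, l (Fin.natAdd Tpre t)))
        - (∑ i : Fin Nco, w (Fin.castAdd Ntr i) * α (Fin.castAdd Ntr i)) * (∑ t : Fin Tpost, l (Fin.natAdd Tpre t))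
        - (∑ i : Fin Nco, w (Fin.castAdd Ntr i)) * (∑ t : Fin Tpost, l (Fin.natAdd Tpre t) * β (Fin.natAdd Tpre t))) := by
    rw [← block_sum (fun i => w (Fin.castAdd Ntr i)) (fun t => l (Fin.natAdd Tpre t))
      (fun i t => Y (Fin.castAdd Ntr i) (Fin.natAdd Tpre t)) μ 0
      (fun i => α (Fin.castAdd Ntr i)) (fun t => β (Fin.natAdd Tpre t))]
    simp_rw [← Finset.sum_neg_distrib]
    refine Finset.sum_congr rfl fun i _ => Finset.sum_congr rfl fun t _ => ?_
    have h1 : ¬ (Nco ≤ ((Fin.castAdd Ntr i : Fin (Nco + Ntr)) : ℕ)) := by simp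
    have h2 : (Tpre ≤ ((Fin.natAdd Tpre t : Fin (Tpre + Tpost)) : ℕ)) := by simp
    simp only [hr, Wind, h1, h2, if_false, if_true, false_and]
    ring
  have Btc : (∑ i : Fin Ntr, ∑ t : Fin Tpre,
      (w (Fin.natAdd Nco i) * (if Nco ≤ ((Fin.natAdd Nco i : Fin (Nco + Ntr)) : ℕ) then (1:ℝ) else -1))
        * (l (Fin.castAdd Tpost t) * (if Tpre ≤ ((Fin.castAdd Tpost t : Fin (Tpre + Tpost)) : ℕ) then (1:ℝ) else -1))
        * r (Fin.natAdd Nco i) (Fin.castAdd Tpost t))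
      = -((∑ i : Fin Ntr, ∑ t : Fin Tpre,
          w (Fin.natAdd Nco i) * l (Fin.castAdd Tpost t) * Y (Fin.natAdd Nco i) (Fin.castAdd Tpost t))
        - (μ + 0) * ((∑ i : Fin Ntr, w (Fin.natAdd Nco i)) * (∑ t : Fin Tpre, l (Fin.castAdd Tpost t)))
        - (∑ i : Fin Ntr, w (Fin.natAdd Nco i) * α (Fin.natAdd Nco i)) * (∑ t : Fin Tpre, l (Fin.castAdd Tpost t))
        - (∑ i : Fin Ntr, w (Fin.natAdd Nco i)) * (∑ t : Fin Tpre, l (Fin.castAdd Tpost t) * β (Fin.castAdd Tpost t))) := by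
    rw [← block_sum (fun i => w (Fin.natAdd Nco i)) (fun t => l (Fin.castAdd Tpost t))
      (fun i t => Y (Fin.natAdd Nco i) (Fin.castAdd Tpost t)) μ 0
      (fun i => α (Fin.natAdd Nco i)) (fun t => β (Fin.castAdd Tpost t))]
    simp_rw [← Finset.sum_neg_distrib]
    refine Finset.sum_congr rfl fun i _ => Finset.sum_congr rfl fun t _ => ?_
    have h1 : (Nco ≤ ((Fin.natAdd Nco i : Fin (Nco + Ntr)) : ℕ)) := by simp
    have h2 : ¬ (Tpre ≤ ((Fin.castAdd Tpost t : Fin (Tpre + Tpost)) : ℕ)) := by simp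
    simp only [hr, Wind, h1, h2, if_false, if_true, and_false]
    ring
  have Btt : (∑ i : Fin Ntr, ∑ t : Fin Tpost,
      (w (Fin.natAdd Nco i) * (if Nco ≤ ((Fin.natAdd Nco i : Fin (Nco + Ntr)) : ℕ) then (1:ℝ) else -1))
        * (l (Fin.natAdd Tpre t) * (if Tpre ≤ ((Fin.natAdd Tpre t : Fin (Tpre + Tpost)) : ℕ) then (1:ℝ) else -1))
        * r (Fin.natAdd Nco i) (Fin.natAdd Tpre t))
      = (∑ i : Fin Ntr, ∑ t : Fin Tpost,
          w (Fin.natAdd Nco i) * l (Fin.natAdd Tpre t) * Y (Fin.natAdd Nco i) (Fin.natAdd Tpre t))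
        - (μ + τ) * ((∑ i : Fin Ntr, w (Fin.natAdd Nco i)) * (∑ t : Fin Tpost, l (Fin.natAdd Tpre t)))
        - (∑ i : Fin Ntr, w (Fin.natAdd Nco i) * α (Fin.natAdd Nco i)) * (∑ t : Fin Tpost, l (Fin.natAdd Tpre t))
        - (∑ i : Fin Ntr, w (Fin.natAdd Nco i)) * (∑ t : Fin Tpost, l (Fin.natAdd Tpre t) * β (Fin.natAdd Tpre t)) := by
    rw [← block_sum (fun i => w (Fin.natAdd Nco i)) (fun t => l (Fin.natAdd Tpre t))
      (fun i t => Y (Fin.natAdd Nco i) (Fin.natAdd Tpre t)) μ τ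
      (fun i => α (Fin.natAdd Nco i)) (fun t => β (Fin.natAdd Tpre t))]
    refine Finset.sum_congr rfl fun i _ => Finset.sum_congr rfl fun t _ => ?_
    have h1 : (Nco ≤ ((Fin.natAdd Nco i : Fin (Nco + Ntr)) : ℕ)) := by simp
    have h2 : (Tpre ≤ ((Fin.natAdd Tpre t : Fin (Tpre + Tpost)) : ℕ)) := by simp
    simp only [hr, Wind, h1, h2, if_true, and_self]
    ring
  -- product reorderings to match tauWDD
  have hYcc : (∑ i : Fin Nco, ∑ t : Fin Tpre,
      w (Fin.castAdd Ntr i) * Y (Fin.castAdd Ntr i) (Fin.castAdd Tpost t) * l (Fin.castAdd Tpost t))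
      = ∑ i : Fin Nco, ∑ t : Fin Tpre,
          w (Fin.castAdd Ntr i) * l (Fin.castAdd Tpost t) * Y (Fin.castAdd Ntr i) (Fin.castAdd Tpost t) :=
    Finset.sum_congr rfl fun i _ => Finset.sum_congr rfl fun t _ => by ring
  have hYct : (∑ i : Fin Nco, ∑ t : Fin Tpost,
      w (Fin.castAdd Ntr i) * Y (Fin.castAdd Ntr i) (Fin.natAdd Tpre t) * l (Fin.natAdd Tpre t))
      = ∑ i : Fin Nco, ∑ t : Fin Tpost,
          w (Fin.castAdd Ntr i) * l (Fin.natAdd Tpre t) * Y (Fin.castAdd Ntr i) (Fin.natAdd Tpre t) :=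
    Finset.sum_congr rfl fun i _ => Finset.sum_congr rfl fun t _ => by ring
  have hYtc : (∑ i : Fin Ntr, ∑ t : Fin Tpre,
      w (Fin.natAdd Nco i) * Y (Fin.natAdd Nco i) (Fin.castAdd Tpost t) * l (Fin.castAdd Tpost t))
      = ∑ i : Fin Ntr, ∑ t : Fin Tpre,
          w (Fin.natAdd Nco i) * l (Fin.castAdd Tpost t) * Y (Fin.natAdd Nco i) (Fin.castAdd Tpost t) :=
    Finset.sum_congr rfl fun i _ => Finset.sum_congr rfl fun t _ => by ring
  have hYtt : (∑ i : Fin Ntr, ∑ t : Fin Tpost,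
      w (Fin.natAdd Nco i) * Y (Fin.natAdd Nco i) (Fin.natAdd Tpre t) * l (Fin.natAdd Tpre t))
      = ∑ i : Fin Ntr, ∑ t : Fin Tpost,
          w (Fin.natAdd Nco i) * l (Fin.natAdd Tpre t) * Y (Fin.natAdd Nco i) (Fin.natAdd Tpre t) :=
    Finset.sum_congr rfl fun i _ => Finset.sum_congr rfl fun t _ => by ring
  rw [Fin.sum_univ_add] at key
  simp only [Fin.sum_univ_add, Finset.sum_add_distrib] at key
  rw [Bcc, Bct, Btc, Btt, hwco, hwt, hlpre, hlq] at key
  simp only [tauWDD]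
  rw [hYcc, hYct, hYtc, hYtt]
  linarith [key]



end SDID
end
end
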